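/- arXiv:2412.19144 — 2 statements merged into one kernel-verified Lean document; each statement's English description precedes it below -/
import Mathlib

section
/- Let G be a graph with no isolated vertices and let p : H₁ → H₂ be a 2-covering map of graphs. Then the induced monotone map p_* : Hom(G,H₁) → Hom(G,H₂), defined by (p_*η)(x) = p(η(x)), is a poset covering map. -/
structure Graph' where
  V : Type
  E : V → V → Prop
  symm : ∀ {x y}, E x y → E y x

def IsGraphHom (G H : Graph') (f : G.V → H.V) : Prop :=
  ∀ {x y}, G.E x y → H.E (f x) (f y)

structure Walk (G : Graph') (a b : G.V) where
  len : ℕ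
  toFun : ℕ → G.V
  start_eq : toFun 0 = a
  end_eq : toFun len = b
  adj : ∀ i, i < len → G.E (toFun i) (toFun (i + 1))

structure MultiHom (G H : Graph') where
  toFun : G.V → Set H.V
  nonempty : ∀ x, (toFun x).Nonempty
  edge : ∀ {x y}, G.E x y → ∀ a ∈ toFun x, ∀ b ∈ toFun y, H.E a b

def MultiHom.le {G H : Graph'} (η η' : MultiHom G H) : Prop :=
  ∀ x, η.toFun x ⊆ η'.toFun x

def SameComponent {G H : Graph'} (η η' : MultiHom G H) : Prop :=
  Relation.ReflTransGen (fun a b => MultiHom.le a b ∨ MultiHom.le b a) η η'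

def ofHom {G H : Graph'} (f : G.V → H.V) (hf : IsGraphHom G H f) : MultiHom G H where
  toFun x := {f x}
  nonempty x := ⟨f x, rfl⟩
  edge := by
    intro x y hxy a ha b hb
    rw [Set.mem_singleton_iff] at ha hb
    subst ha; subst hb
    exact hf hxy

def prodI (G : Graph') (n : ℕ) : Graph' where
  V := G.V × Fin (n + 1)
  E := fun p q => G.E p.1 q.1 ∧ p.2.val ≤ q.2.val + 1 ∧ q.2.val ≤ p.2.val + 1
  symm := by
    rintro p q ⟨h1, h2, h3⟩
    exact ⟨G.symm h1, h3, h2⟩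

def MoveA {G : Graph'} {a b : G.V} (γ δ : Walk G a b) : Prop :=
  δ.len = γ.len + 2 ∧ ∃ k ≤ γ.len,
    (∀ i ≤ k, δ.toFun i = γ.toFun i) ∧
    (∀ i, k ≤ i → i ≤ γ.len → δ.toFun (i + 2) = γ.toFun i)

def MoveB {G : Graph'} {a b : G.V} (γ δ : Walk G a b) : Prop :=
  γ.len = δ.len ∧ ∃ j, ∀ i ≤ γ.len, i ≠ j → γ.toFun i = δ.toFun i

def Eqv1 {G : Graph'} {a b : G.V} : Walk G a b → Walk G a b → Prop :=
  Relation.EqvGen MoveA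

def Eqv2 {G : Graph'} {a b : G.V} : Walk G a b → Walk G a b → Prop :=
  Relation.EqvGen (fun γ δ => MoveA γ δ ∨ MoveB γ δ)

noncomputable def Graph'.dist (G : Graph') (a b : G.V) : ℕ :=
  sInf {n | ∃ γ : Walk G a b, γ.len = n}

def Graph'.Connected (G : Graph') : Prop := ∀ a b : G.V, Nonempty (Walk G a b)

def Graph'.Bipartite (G : Graph') : Prop :=
  ∃ c : G.V → ZMod 2, ∀ {x y}, G.E x y → c x ≠ c y

def constWalk {G : Graph'} (a : G.V) : Walk G a a :=
  ⟨0, fun _ => a, rfl, rfl, fun i hi => absurd hi (by omega)⟩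

def Walk.concat {G : Graph'} {a b c : G.V} (γ : Walk G a b) (δ : Walk G b c) :
    Walk G a c where
  len := γ.len + δ.len
  toFun i := if i ≤ γ.len then γ.toFun i else δ.toFun (i - γ.len)
  start_eq := by simp [γ.start_eq]
  end_eq := by
    by_cases h : δ.len = 0
    · have hbc : b = c := by
        have h1 := δ.end_eq
        rw [h, δ.start_eq] at h1
        exact h1
      simp [h, γ.end_eq, hbc]
    · have h1 : ¬ (γ.len + δ.len ≤ γ.len) := by omega
      try dsimp only
      rw [if_neg h1]
      have h2 : γ.len + δ.len - γ.len = δ.len := by omega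
      rw [h2, δ.end_eq]
  adj := by
    intro i hi
    try dsimp only
    rcases lt_trichotomy i γ.len with h | h | h
    · rw [if_pos (by omega : i ≤ γ.len), if_pos (by omega : i + 1 ≤ γ.len)]
      exact γ.adj i h
    · have hδ : 0 < δ.len := by omega
      rw [if_pos (by omega : i ≤ γ.len), if_neg (by omega : ¬ i + 1 ≤ γ.len)]
      have h2 : i + 1 - γ.len = 1 := by omega
      rw [h2, h, γ.end_eq]
      have h3 := δ.adj 0 hδ
      rw [δ.start_eq] at h3
      exact h3
    · rw [if_neg (by omega : ¬ i ≤ γ.len), if_neg (by omega : ¬ i + 1 ≤ γ.len)]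
      have h2 : i + 1 - γ.len = (i - γ.len) + 1 := by omega
      rw [h2]
      exact δ.adj (i - γ.len) (by omega)

def Walk.reverse {G : Graph'} {a b : G.V} (γ : Walk G a b) : Walk G b a where
  len := γ.len
  toFun i := γ.toFun (γ.len - i)
  start_eq := by simp [γ.end_eq]
  end_eq := by simp [γ.start_eq]
  adj := by
    intro i hi
    have h1 : γ.len - i = (γ.len - (i + 1)) + 1 := by omega
    have h2 := γ.adj (γ.len - (i + 1)) (by omega)
    rw [← h1] at h2
    exact G.symm h2

def Walk.map {G H : Graph'} (f : G.V → H.V) (hf : IsGraphHom G H f) {a b : G.V}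
    (γ : Walk G a b) : Walk H (f a) (f b) where
  len := γ.len
  toFun i := f (γ.toFun i)
  start_eq := by (try dsimp only); rw [γ.start_eq]
  end_eq := by (try dsimp only); rw [γ.end_eq]
  adj := fun i hi => hf (γ.adj i hi)

def Walk.pow {G : Graph'} {a : G.V} (γ : Walk G a a) : ℕ → Walk G a a
  | 0 => constWalk a
  | n + 1 => (Walk.pow γ n).concat γ

def Walk.zpow {G : Graph'} {a : G.V} (γ : Walk G a a) : ℤ → Walk G a a
  | Int.ofNat n => γ.pow n
  | Int.negSucc n => γ.reverse.pow (n + 1)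
def finClip (n t : ℕ) : Fin (n + 1) := ⟨min t n, by omega⟩

def realizedWalk {G H : Graph'} {n : ℕ} (h : (prodI G n).V → H.V)
    (hh : IsGraphHom (prodI G n) H h) {v v' : G.V} (hvv' : G.E v v')
    {w : H.V} (h0 : h (v, finClip n 0) = w) (hN : h (v, finClip n n) = w) :
    Walk H w w where
  len := 2 * n
  toFun i := if i % 2 = 0 then h (v, finClip n (i / 2)) else h (v', finClip n (i / 2))
  start_eq := by
    try dsimp only
    rw [if_pos (by norm_num : (0:ℕ) % 2 = 0), Nat.zero_div]
    exact h0
  end_eq := by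
    try dsimp only
    rw [if_pos (by omega : (2 * n) % 2 = 0)]
    have h2 : 2 * n / 2 = n := by omega
    rw [h2]
    exact hN
  adj := by
    intro i hi
    try dsimp only
    rcases Nat.even_or_odd i with he | ho
    · obtain ⟨t, ht⟩ := he
      rw [if_pos (by omega : i % 2 = 0), if_neg (by omega : ¬ (i + 1) % 2 = 0)]
      have h4 : (i + 1) / 2 = i / 2 := by omega
      rw [h4]
      refine hh ⟨hvv', ?_, ?_⟩ <;> (dsimp only; omega)
    · obtain ⟨t, ht⟩ := ho
      rw [if_neg (by omega : ¬ i % 2 = 0), if_pos (by omega : (i + 1) % 2 = 0)]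
      refine hh ⟨G.symm hvv', ?_, ?_⟩ <;> (dsimp only [finClip]; omega)

def Realizable {G H : Graph'} (f : G.V → H.V) (v : G.V) (ω : Walk H (f v) (f v)) : Prop :=
  ∃ (n : ℕ) (h : (prodI G n).V → H.V) (hh : IsGraphHom (prodI G n) H h)
    (hs : ∀ x, h (x, finClip n 0) = f x) (he : ∀ x, h (x, finClip n n) = f x)
    (v' : G.V) (_ : G.E v v'),
    Eqv2 ω (realizedWalk h hh ‹G.E v v'› (hs v) (he v))
def SquareFree (G : Graph') : Prop :=
  (∀ x, ¬ G.E x x) ∧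
  ¬ ∃ a b c d : G.V, a ≠ b ∧ a ≠ c ∧ a ≠ d ∧ b ≠ c ∧ b ≠ d ∧ c ≠ d ∧
    G.E a b ∧ G.E b c ∧ G.E c d ∧ G.E d a

def nbhd (G : Graph') (v : G.V) : Set G.V := {y | G.E v y}

def nbhd2 (G : Graph') (v : G.V) : Set G.V := {z | ∃ y, G.E v y ∧ G.E y z}

def IsGraphCovering (G H : Graph') (p : G.V → H.V) : Prop :=
  IsGraphHom G H p ∧ ∀ v : G.V, Set.BijOn p (nbhd G v) (nbhd H (p v))

def Is2CoveringMap (G H : Graph') (p : G.V → H.V) : Prop :=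
  IsGraphHom G H p ∧ ∀ v : G.V,
    Set.BijOn p (nbhd G v) (nbhd H (p v)) ∧ Set.BijOn p (nbhd2 G v) (nbhd2 H (p v))

def pushforward {G H1 H2 : Graph'} (p : H1.V → H2.V) (hp : IsGraphHom H1 H2 p)
    (η : MultiHom G H1) : MultiHom G H2 where
  toFun x := p '' η.toFun x
  nonempty x := (η.nonempty x).image p
  edge := by
    rintro x y hxy a ⟨a', ha', rfl⟩ b ⟨b', hb', rfl⟩
    exact hp (η.edge hxy a' ha' b' hb')

def IsCycleWalk {G : Graph'} {a : G.V} (γ : Walk G a a) : Prop :=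
  3 ≤ γ.len ∧ ∀ i j, i < γ.len → j < γ.len → γ.toFun i = γ.toFun j → i = j

def IsTree (T : Graph') : Prop :=
  (∀ x, ¬ T.E x x) ∧ (∀ a b : T.V, Nonempty (Walk T a b)) ∧
    ∀ (a : T.V) (γ : Walk T a a), ¬ IsCycleWalk γ

def IsPath {G : Graph'} {a b : G.V} (γ : Walk G a b) : Prop :=
  ∀ i j, i ≤ γ.len → j ≤ γ.len → γ.toFun i = γ.toFun j → i = j

def OnWalk {G : Graph'} {a b : G.V} (γ : Walk G a b) (y : G.V) : Prop :=
  ∃ i ≤ γ.len, γ.toFun i = y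

def CrossHomotopic (G H : Graph') (f g : G.V → H.V) : Prop :=
  ∃ (n : ℕ) (h : (prodI G n).V → H.V), IsGraphHom (prodI G n) H h ∧
    (∀ x, h (x, finClip n 0) = f x) ∧ (∀ x, h (x, finClip n n) = g x)

def quotGraph (G : Graph') (Γ : Type) [Group Γ] [MulAction Γ G.V] : Graph' where
  V := Quotient (MulAction.orbitRel Γ G.V)
  E := fun α β => ∃ x y : G.V, Quotient.mk (MulAction.orbitRel Γ G.V) x = α ∧
        Quotient.mk (MulAction.orbitRel Γ G.V) y = β ∧ G.E x y
  symm := by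
    rintro α β ⟨x, y, hx, hy, hxy⟩
    exact ⟨y, x, hy, hx, G.symm hxy⟩
lemma multiHom_ext {G H : Graph'} {η η' : MultiHom G H}
    (h : ∀ x, η.toFun x = η'.toFun x) : η = η' := by
  cases η; cases η'
  simp only [MultiHom.mk.injEq]
  funext x; exact h x

lemma injOn_image_eq {α β : Type*} {f : α → β} {N S T : Set α}
    (hinj : Set.InjOn f N) (hS : S ⊆ N) (hT : T ⊆ N)
    (h : f '' S = f '' T) : S = T := by
  ext b
  constructor
  · intro hb
    obtain ⟨e, he, hpe⟩ := h ▸ Set.mem_image_of_mem f hb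
    rwa [hinj (hT he) (hS hb) hpe] at he
  · intro hb
    obtain ⟨e, he, hpe⟩ := h.symm ▸ Set.mem_image_of_mem f hb
    rwa [hinj (hS he) (hT hb) hpe] at he

/-- The canonical lift set for the "up" direction of the poset covering property. -/
def liftSet {G H1 H2 : Graph'} (p : H1.V → H2.V) (η : MultiHom G H1)
    (y' : MultiHom G H2) (x : G.V) : Set H1.V :=
  {b | p b ∈ y'.toFun x ∧ ∀ z, G.E x z → ∀ a ∈ η.toFun z, H1.E a b}

section LiftLemmas

variable {G H1 H2 : Graph'} {p : H1.V → H2.V} {η : MultiHom G H1} {y' : MultiHom G H2}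

lemma lift_key (hp : Is2CoveringMap H1 H2 p)
    (himg : ∀ x, p '' η.toFun x ⊆ y'.toFun x) {x z z' : G.V} (hxz : G.E x z) (hxz' : G.E x z')
    {a : H1.V} (ha : a ∈ η.toFun z) {a' : H1.V} (ha' : a' ∈ η.toFun z')
    {b : H1.V} (hab : H1.E a b) (hpb : p b ∈ y'.toFun x) : H1.E a' b := by
  obtain ⟨c, hc⟩ := η.nonempty x
  have hca : H1.E c a := η.edge hxz c hc a ha
  have hca' : H1.E c a' := η.edge hxz' c hc a' ha'
  have hpa' : p a' ∈ y'.toFun z' := himg z' ⟨a', ha', rfl⟩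
  have hE2 : p b ∈ nbhd H2 (p a') := H2.symm (y'.edge hxz' (p b) hpb (p a') hpa')
  obtain ⟨e, he, hpe⟩ := (hp.2 a').1.surjOn hE2
  have hb2 : b ∈ nbhd2 H1 c := ⟨a, hca, hab⟩
  have he2 : e ∈ nbhd2 H1 c := ⟨a', hca', he⟩
  have heb : e = b := (hp.2 c).2.injOn he2 hb2 hpe
  exact heb ▸ he

lemma lift_exists (hp : Is2CoveringMap H1 H2 p)
    (himg : ∀ x, p '' η.toFun x ⊆ y'.toFun x) (x : G.V) {z : G.V} (hxz : G.E x z) {c' : H2.V}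
    (hc' : c' ∈ y'.toFun x) :
    ∃ b ∈ liftSet p η y' x, p b = c' := by
  obtain ⟨a, ha⟩ := η.nonempty z
  have hpa : p a ∈ y'.toFun z := himg z ⟨a, ha, rfl⟩
  have hE : c' ∈ nbhd H2 (p a) := H2.symm (y'.edge hxz c' hc' (p a) hpa)
  obtain ⟨b, hb, hpb⟩ := (hp.2 a).1.surjOn hE
  have hpb' : p b ∈ y'.toFun x := by rw [hpb]; exact hc'
  refine ⟨b, ⟨hpb', ?_⟩, hpb⟩
  intro z' hxz' a' ha'
  exact lift_key hp himg hxz hxz' ha ha' hb hpb'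

lemma lift_image (hp : Is2CoveringMap H1 H2 p)
    (himg : ∀ x, p '' η.toFun x ⊆ y'.toFun x)
    (hG : ∀ x : G.V, ∃ y, G.E x y) (x : G.V) :
    p '' liftSet p η y' x = y'.toFun x := by
  apply Set.Subset.antisymm
  · rintro c ⟨b, hb, rfl⟩; exact hb.1
  · intro c' hc'
    obtain ⟨z, hxz⟩ := hG x
    obtain ⟨b, hb, hpb⟩ := lift_exists hp himg x hxz hc'
    exact ⟨b, hb, hpb⟩

lemma lift_edge (hp : Is2CoveringMap H1 H2 p)
    (himg : ∀ x, p '' η.toFun x ⊆ y'.toFun x) {x x' : G.V} (hxx' : G.E x x')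
    {b : H1.V} (hb : b ∈ liftSet p η y' x)
    {b' : H1.V} (hb' : b' ∈ liftSet p η y' x') : H1.E b b' := by
  obtain ⟨c, hc⟩ := η.nonempty x
  obtain ⟨c', hc'⟩ := η.nonempty x'
  have hcc' : H1.E c' c := η.edge (G.symm hxx') c' hc' c hc
  have hc'b : H1.E c' b := hb.2 x' hxx' c' hc'
  have hcb' : H1.E c b' := hb'.2 x (G.symm hxx') c hc
  have hE2 : p b' ∈ nbhd H2 (p b) := y'.edge hxx' (p b) hb.1 (p b') hb'.1
  obtain ⟨e, he, hpe⟩ := (hp.2 b).1.surjOn hE2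
  have he2 : e ∈ nbhd2 H1 c' := ⟨b, hc'b, he⟩
  have hb'2 : b' ∈ nbhd2 H1 c' := ⟨c, hcc', hcb'⟩
  have heb : e = b' := (hp.2 c').2.injOn he2 hb'2 hpe
  exact heb ▸ he

lemma lift_le (himg : ∀ x, p '' η.toFun x ⊆ y'.toFun x) (x : G.V) : η.toFun x ⊆ liftSet p η y' x := by
  intro c₀ hc₀
  refine ⟨himg x ⟨c₀, hc₀, rfl⟩, ?_⟩
  intro z hxz a ha
  exact H1.symm (η.edge hxz c₀ hc₀ a ha)

lemma lift_subset_nbhd (x : G.V) {z : G.V} (hxz : G.E x z) {a : H1.V}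
    (ha : a ∈ η.toFun z) : liftSet p η y' x ⊆ nbhd H1 a :=
  fun _ hb => hb.2 z hxz a ha

end LiftLemmas

theorem statement_3 (G H1 H2 : Graph') (hG : ∀ x : G.V, ∃ y, G.E x y)
    (p : H1.V → H2.V) (hp : Is2CoveringMap H1 H2 p) :
    (∀ η η' : MultiHom G H1, MultiHom.le η η' →
      MultiHom.le (pushforward p hp.1 η) (pushforward p hp.1 η')) ∧
    ∀ y y' : MultiHom G H2, MultiHom.le y y' →
      (∀ x : MultiHom G H1, pushforward p hp.1 x = y →
        ∃! x' : MultiHom G H1, MultiHom.le x x' ∧ pushforward p hp.1 x' = y') ∧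
      (∀ x' : MultiHom G H1, pushforward p hp.1 x' = y' →
        ∃! x : MultiHom G H1, MultiHom.le x x' ∧ pushforward p hp.1 x = y) := by
  constructor
  · rintro η η' hle x b ⟨a, ha, rfl⟩
    exact ⟨a, hle x ha, rfl⟩
  intro y y' hyy'
  constructor
  · -- up direction
    intro η hη
    have hpη : ∀ x, p '' η.toFun x = y.toFun x :=
      fun x => congrArg (fun m => MultiHom.toFun m x) hη
    have himg : ∀ x, p '' η.toFun x ⊆ y'.toFun x := fun x => (hpη x) ▸ hyy' x
    refine ⟨⟨liftSet p η y', ?_, ?_⟩, ⟨?_, ?_⟩, ?_⟩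
    · intro x
      obtain ⟨z, hxz⟩ := hG x
      obtain ⟨c', hc'⟩ := y'.nonempty x
      obtain ⟨b, hb, _⟩ := lift_exists hp himg x hxz hc'
      exact ⟨b, hb⟩
    · intro x x' hxx' b hb b' hb'
      exact lift_edge hp himg hxx' hb hb'
    · exact fun x => lift_le himg x
    · apply multiHom_ext
      intro x
      exact lift_image hp himg hG x
    · rintro ξ ⟨hleξ, hpushξ⟩
      apply multiHom_ext
      intro x
      obtain ⟨z, hxz⟩ := hG x
      obtain ⟨a, ha⟩ := η.nonempty z
      have hξimg : p '' ξ.toFun x = y'.toFun x :=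
        congrArg (fun m => MultiHom.toFun m x) hpushξ
      have hξsub : ξ.toFun x ⊆ nbhd H1 a := by
        intro b hb
        exact H1.symm (ξ.edge hxz b hb a (hleξ z ha))
      refine injOn_image_eq (hp.2 a).1.injOn hξsub
        (lift_subset_nbhd x hxz ha) ?_
      rw [hξimg, lift_image hp himg hG x]
  · -- down direction
    intro η' hη'
    have hpη' : ∀ x, p '' η'.toFun x = y'.toFun x :=
      fun x => congrArg (fun m => MultiHom.toFun m x) hη'
    have hdown : ∀ x, p '' {b | b ∈ η'.toFun x ∧ p b ∈ y.toFun x} = y.toFun x := by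
      intro x
      apply Set.Subset.antisymm
      · rintro c ⟨b, hb, rfl⟩; exact hb.2
      · intro c hc
        have : c ∈ p '' η'.toFun x := (hpη' x) ▸ hyy' x hc
        obtain ⟨b, hb, rfl⟩ := this
        exact ⟨b, ⟨hb, hc⟩, rfl⟩
    refine ⟨⟨fun x => {b | b ∈ η'.toFun x ∧ p b ∈ y.toFun x}, ?_, ?_⟩, ⟨?_, ?_⟩, ?_⟩
    · intro x
      obtain ⟨c, hc⟩ := y.nonempty x
      have hc' : c ∈ p '' {b | b ∈ η'.toFun x ∧ p b ∈ y.toFun x} := (hdown x).symm ▸ hc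
      obtain ⟨b, hb, _⟩ := hc'
      exact ⟨b, hb⟩
    · intro x x' hxx' b hb b' hb'
      exact η'.edge hxx' b hb.1 b' hb'.1
    · exact fun x b hb => hb.1
    · exact multiHom_ext (fun x => hdown x)
    · rintro ξ ⟨hleξ, hpushξ⟩
      apply multiHom_ext
      intro x
      obtain ⟨z, hxz⟩ := hG x
      obtain ⟨a, ha⟩ := η'.nonempty z
      have hξimg : p '' ξ.toFun x = y.toFun x :=
        congrArg (fun m => MultiHom.toFun m x) hpushξ
      have hsub : ∀ S : Set H1.V, S ⊆ η'.toFun x → S ⊆ nbhd H1 a := by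
        intro S hS b hb
        exact H1.symm (η'.edge hxz b (hS hb) a ha)
      refine injOn_image_eq (hp.2 a).1.injOn (hsub _ (hleξ x))
        (hsub _ (fun b hb => hb.1)) ?_
      rw [hξimg, hdown x]
end

section
/- Let G and H be finite connected graphs, each with at least one edge, with H square-free, let f : G → H be a graph homomorphism, v ∈ V(G) a non-isolated vertex, w = f(v), and let K be the image of f_* : π₁²(G,v) → π₁²(H,w). If K is an infinite cyclic group (isomorphic to ℤ), then Π(f,v) is either the trivial group or an infinite cyclic group. -/
namespace Aux

variable {Hg : Graph'}

theorem eqv2_refl {a b : Hg.V} (γ : Walk Hg a b) : Eqv2 γ γ := Relation.EqvGen.refl γ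

theorem eqv2_symm {a b : Hg.V} {γ δ : Walk Hg a b} (h : Eqv2 γ δ) : Eqv2 δ γ :=
  Relation.EqvGen.symm _ _ h

theorem eqv2_trans {a b : Hg.V} {γ δ ε : Walk Hg a b} (h1 : Eqv2 γ δ) (h2 : Eqv2 δ ε) :
    Eqv2 γ ε := Relation.EqvGen.trans _ _ _ h1 h2

theorem eqv2_of_agree {a b : Hg.V} {γ δ : Walk Hg a b} (hlen : γ.len = δ.len)
    (hag : ∀ i ≤ γ.len, γ.toFun i = δ.toFun i) : Eqv2 γ δ :=
  Relation.EqvGen.rel _ _ (Or.inr ⟨hlen, γ.len + 1, fun i hi _ => hag i hi⟩)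

def letter (emb : Hg.V → ℕ) (a b : Hg.V) : (Hg.V × Hg.V) × Bool :=
  if emb a < emb b then ((a, b), true) else ((b, a), false)

def wordList (emb : Hg.V → ℕ) {a b : Hg.V} (γ : Walk Hg a b) : List ((Hg.V × Hg.V) × Bool) :=
  (List.range γ.len).map fun i => letter emb (γ.toFun i) (γ.toFun (i + 1))

def wordOf (emb : Hg.V → ℕ) {a b : Hg.V} (γ : Walk Hg a b) : FreeGroup (Hg.V × Hg.V) :=
  FreeGroup.mk (wordList emb γ)

variable {emb : Hg.V → ℕ}

theorem letter_flip (hemb : Function.Injective emb) {a b : Hg.V} (hab : a ≠ b) :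
    letter emb b a = ((letter emb a b).1, !(letter emb a b).2) := by
  have hne : emb a ≠ emb b := fun h => hab (hemb h)
  unfold letter
  rcases lt_or_gt_of_ne hne with h | h
  · rw [if_pos h, if_neg (show ¬ emb b < emb a by omega)]; rfl
  · rw [if_pos h, if_neg (show ¬ emb a < emb b by omega)]; rfl

theorem letter_snd {a b c : Hg.V} (h : letter emb a b = letter emb a c) : b = c := by
  unfold letter at h
  by_cases h1 : emb a < emb b <;> by_cases h2 : emb a < emb c <;>
    simp [h1, h2, Prod.ext_iff] at h <;> tauto

theorem letter_cancel (hemb : Function.Injective emb) {x y z : Hg.V} (hxy : x ≠ y)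
    (h : letter emb y z = ((letter emb x y).1, !(letter emb x y).2)) : z = x :=
  letter_snd (h.trans (letter_flip hemb hxy).symm)

theorem wordList_length {a b : Hg.V} (γ : Walk Hg a b) :
    (wordList emb γ).length = γ.len := by simp [wordList]

theorem wordList_getElem {a b : Hg.V} (γ : Walk Hg a b) (i : ℕ)
    (h : i < (wordList emb γ).length) :
    (wordList emb γ)[i] = letter emb (γ.toFun i) (γ.toFun (i + 1)) := by
  simp [wordList]

theorem wordList_eq_of_agree {a b a' b' : Hg.V} {γ : Walk Hg a b} {δ : Walk Hg a' b'}
    (hlen : γ.len = δ.len) (hag : ∀ i ≤ γ.len, γ.toFun i = δ.toFun i) :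
    wordList emb γ = wordList emb δ := by
  unfold wordList
  rw [← hlen]
  apply List.map_congr_left
  intro i hi
  rw [List.mem_range] at hi
  rw [hag i (by omega), hag (i + 1) (by omega)]

theorem mk_cancel (hemb : Function.Injective emb) {x y : Hg.V} (hxy : x ≠ y)
    (A B : List ((Hg.V × Hg.V) × Bool)) :
    FreeGroup.mk (A ++ letter emb x y :: letter emb y x :: B) = FreeGroup.mk (A ++ B) := by
  rw [letter_flip hemb hxy]
  exact Quot.sound FreeGroup.Red.Step.not

end Aux
namespace Aux

theorem getElem_append_cons_cons {α : Type*} (A B : List α) (x y : α) (i : ℕ)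
    (h : i < (A ++ x :: y :: B).length) :
    (A ++ x :: y :: B)[i] =
      if h1 : i < A.length then A[i]
      else if h2 : i = A.length then x
      else if h3 : i = A.length + 1 then y
      else B[i - A.length - 2]'(by simp at h ⊢; omega) := by
  by_cases h1 : i < A.length
  · rw [dif_pos h1, List.getElem_append_left h1]
  · rw [dif_neg h1, List.getElem_append_right (by omega)]
    have hcc : ∀ (k : ℕ) (hk : k < (x :: y :: B).length),
        (x :: y :: B)[k] =
          if h0 : k = 0 then x else if h1 : k = 1 then y
          else B[k - 2]'(by simp at hk ⊢; omega) := by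
      intro k hk
      match k with
      | 0 => rfl
      | 1 => rfl
      | (n+2) => simp
    rw [hcc]
    by_cases h2 : i = A.length
    · rw [dif_pos (by omega), dif_pos h2]
    · rw [dif_neg (by omega), dif_neg h2]
      by_cases h3 : i = A.length + 1
      · rw [dif_pos (by omega), dif_pos h3]
      · rw [dif_neg (by omega), dif_neg h3]

variable {Hg : Graph'} {emb : Hg.V → ℕ}

theorem wordOf_moveB (hemb : Function.Injective emb) (hirr : ∀ x, ¬ Hg.E x x)
    (hsq : ¬ ∃ a b c d : Hg.V, a ≠ b ∧ a ≠ c ∧ a ≠ d ∧ b ≠ c ∧ b ≠ d ∧ c ≠ d ∧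
      Hg.E a b ∧ Hg.E b c ∧ Hg.E c d ∧ Hg.E d a)
    {a b : Hg.V} {γ δ : Walk Hg a b} (h : MoveB γ δ) :
    wordOf emb γ = wordOf emb δ := by
  obtain ⟨hlen, j0, hj⟩ := h
  by_cases hall : ∀ i ≤ γ.len, γ.toFun i = δ.toFun i
  · exact congrArg FreeGroup.mk (wordList_eq_of_agree hlen hall)
  push_neg at hall
  obtain ⟨j, hjj_le, hjj⟩ := hall
  have hjje : j = j0 := by
    by_contra hne
    exact hjj (hj j hjj_le hne)
  subst hjje
  have hj0 : j ≠ 0 := by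
    intro h0; subst h0
    exact hjj (γ.start_eq.trans δ.start_eq.symm)
  have hjlen : j ≠ γ.len := by
    intro hl; subst hl
    exact hjj (γ.end_eq.trans (hlen ▸ δ.end_eq).symm)
  have hjlt : j < γ.len := lt_of_le_of_ne hjj_le hjlen
  have hj1 : 1 ≤ j := by omega
  have hcx : Hg.E (γ.toFun (j - 1)) (γ.toFun j) := by
    have := γ.adj (j - 1) (by omega)
    rwa [show j - 1 + 1 = j by omega] at this
  have hxd : Hg.E (γ.toFun j) (γ.toFun (j + 1)) := γ.adj j hjlt
  have hcy : Hg.E (γ.toFun (j - 1)) (δ.toFun j) := by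
    have h2 := δ.adj (j - 1) (by omega)
    rw [show j - 1 + 1 = j by omega] at h2
    rwa [← hj (j - 1) (by omega) (by omega)] at h2
  have hyd : Hg.E (δ.toFun j) (γ.toFun (j + 1)) := by
    have h2 := δ.adj j (by omega)
    rwa [← hj (j + 1) (by omega) (by omega)] at h2
  by_cases hcd : γ.toFun (j - 1) = γ.toFun (j + 1)
  · -- backtrack case: both words reduce to the same thing
    have hAl : ((wordList emb γ).take (j-1)).length = j - 1 := by
      rw [List.length_take, wordList_length]; omega
    have key : ∀ {a' b' : Hg.V} (ε : Walk Hg a' b') (z : Hg.V), ε.len = γ.len →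
        (∀ i ≤ γ.len, i ≠ j → ε.toFun i = γ.toFun i) → ε.toFun j = z →
        wordList emb ε = (wordList emb γ).take (j-1) ++
          letter emb (γ.toFun (j-1)) z :: letter emb z (γ.toFun (j-1)) ::
          (wordList emb γ).drop (j+1) := by
      intro a' b' ε z hel hag hz
      apply List.ext_getElem
      · simp only [wordList_length, hel, List.length_append, List.length_cons,
          List.length_take, List.length_drop]
        omega
      intro i h1 h2
      have h1' : i < γ.len := by rwa [wordList_length, hel] at h1
      rw [wordList_getElem, getElem_append_cons_cons]
      by_cases hi : i < j - 1
      · rw [dif_pos (by rw [hAl]; omega), List.getElem_take, wordList_getElem,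
          hag i (by omega) (by omega), hag (i+1) (by omega) (by omega)]
      · by_cases hi2 : i = j - 1
        · subst hi2
          rw [dif_neg (by rw [hAl]; omega), dif_pos (by rw [hAl])]
          rw [hag (j-1) (by omega) (by omega), show j - 1 + 1 = j by omega, hz]
        · by_cases hi3 : i = j
          · rw [dif_neg (by rw [hAl]; omega), dif_neg (by rw [hAl]; omega),
              dif_pos (by rw [hAl]; omega)]
            rw [hi3, hz, hag (j+1) (by omega) (by omega), ← hcd]
          · rw [dif_neg (by rw [hAl]; omega), dif_neg (by rw [hAl]; omega),
              dif_neg (by rw [hAl]; omega), List.getElem_drop, wordList_getElem]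
            rw [hag i (by omega) (by omega), hag (i+1) (by omega) (by omega)]
            rw [show j + 1 + (i - ((wordList emb γ).take (j-1)).length - 2) = i by
              rw [hAl]; omega]
    have hγw := key γ (γ.toFun j) rfl (fun i _ _ => rfl) rfl
    have hδw := key δ (δ.toFun j) hlen.symm (fun i hi hne => (hj i hi hne).symm) rfl
    have hne1 : γ.toFun (j-1) ≠ γ.toFun j := fun he => hirr _ (he ▸ hcx)
    have hne2 : γ.toFun (j-1) ≠ δ.toFun j := fun he => hirr _ (he ▸ hcy)
    rw [wordOf, wordOf, hγw, hδw, mk_cancel hemb hne1, mk_cancel hemb hne2]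
  · -- square case: contradiction
    exfalso
    apply hsq
    refine ⟨γ.toFun (j-1), γ.toFun j, γ.toFun (j+1), δ.toFun j, ?_, hcd, ?_, ?_, ?_, ?_,
      hcx, hxd, Hg.symm hyd, Hg.symm hcy⟩
    · exact fun he => hirr _ (he ▸ hcx)
    · exact fun he => hirr _ (he ▸ hcy)
    · exact fun he => hirr _ (he ▸ hxd)
    · exact fun he => hjj he
    · exact fun he => hirr _ (he.symm ▸ hyd)

theorem wordOf_moveA (hemb : Function.Injective emb) (hirr : ∀ x, ¬ Hg.E x x)
    {a b : Hg.V} {γ δ : Walk Hg a b} (h : MoveA γ δ) :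
    wordOf emb γ = wordOf emb δ := by
  obtain ⟨hlen, k, hk, hag, hsh⟩ := h
  have hky : Hg.E (γ.toFun k) (δ.toFun (k + 1)) := by
    have h2 := δ.adj k (by omega)
    rwa [hag k le_rfl] at h2
  have hAl : ((wordList emb γ).take k).length = k := by
    rw [List.length_take, wordList_length]; omega
  have hδw : wordList emb δ = (wordList emb γ).take k ++
      letter emb (γ.toFun k) (δ.toFun (k+1)) ::
      letter emb (δ.toFun (k+1)) (γ.toFun k) :: (wordList emb γ).drop k := by
    apply List.ext_getElem
    · simp only [wordList_length, hlen, List.length_append, List.length_cons,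
        List.length_take, List.length_drop]
      omega
    intro i h1 h2
    have h1' : i < γ.len + 2 := by rwa [wordList_length, hlen] at h1
    rw [wordList_getElem, getElem_append_cons_cons]
    by_cases hi : i < k
    · rw [dif_pos (by rw [hAl]; omega), List.getElem_take, wordList_getElem,
        hag i (by omega), hag (i+1) (by omega)]
    · by_cases hi2 : i = k
      · subst hi2
        rw [dif_neg (by rw [hAl]; omega), dif_pos (by rw [hAl])]
        rw [hag i le_rfl]
      · by_cases hi3 : i = k + 1
        · subst hi3
          rw [dif_neg (by rw [hAl]; omega), dif_neg (by rw [hAl]; omega),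
            dif_pos (by rw [hAl])]
          rw [show k + 1 + 1 = k + 2 by omega, hsh k le_rfl hk]
        · rw [dif_neg (by rw [hAl]; omega), dif_neg (by rw [hAl]; omega),
            dif_neg (by rw [hAl]; omega), List.getElem_drop, wordList_getElem]
          have e1 : δ.toFun i = γ.toFun (i - 2) := by
            have h3 := hsh (i - 2) (by omega) (by omega)
            rwa [show i - 2 + 2 = i by omega] at h3
          have e2 : δ.toFun (i + 1) = γ.toFun (i - 2 + 1) := by
            have h3 := hsh (i - 1) (by omega) (by omega)
            rw [show i - 1 + 2 = i + 1 by omega] at h3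
            rw [h3]
            congr 1
            omega
          rw [e1, e2, show k + (i - ((wordList emb γ).take k).length - 2) = i - 2 by
            rw [hAl]; omega]
  have hne : γ.toFun k ≠ δ.toFun (k + 1) := fun he => hirr _ (he ▸ hky)
  rw [wordOf, wordOf, hδw, mk_cancel hemb hne, List.take_append_drop]

theorem wordOf_sound (hemb : Function.Injective emb) (hirr : ∀ x, ¬ Hg.E x x)
    (hsq : ¬ ∃ a b c d : Hg.V, a ≠ b ∧ a ≠ c ∧ a ≠ d ∧ b ≠ c ∧ b ≠ d ∧ c ≠ d ∧
      Hg.E a b ∧ Hg.E b c ∧ Hg.E c d ∧ Hg.E d a)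
    {a b : Hg.V} {γ δ : Walk Hg a b} (h : Eqv2 γ δ) :
    wordOf emb γ = wordOf emb δ := by
  induction h with
  | rel _ _ h =>
    rcases h with h | h
    · exact wordOf_moveA hemb hirr h
    · exact wordOf_moveB hemb hirr hsq h
  | refl _ => rfl
  | symm _ _ _ ih => exact ih.symm
  | trans _ _ _ _ _ ih1 ih2 => exact ih1.trans ih2

end Aux
namespace Aux

variable {Hg : Graph'} {emb : Hg.V → ℕ}

theorem letter_bridge {a b : Hg.V} {δ : Walk Hg a b} {M : List ((Hg.V × Hg.V) × Bool)}
    (hL : wordList emb δ = M) (i : ℕ) (hi : i < δ.len) (hi2 : i < M.length) :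
    letter emb (δ.toFun i) (δ.toFun (i + 1)) = M[i] := by
  subst hL
  exact (wordList_getElem δ i (by rwa [wordList_length])).symm

theorem red_real (hemb : Function.Injective emb) (hirr : ∀ x, ¬ Hg.E x x)
    {a b : Hg.V} (γ : Walk Hg a b) {L : List ((Hg.V × Hg.V) × Bool)}
    (h : FreeGroup.Red (wordList emb γ) L) :
    ∃ δ : Walk Hg a b, Eqv2 γ δ ∧ wordList emb δ = L := by
  induction h with
  | refl => exact ⟨γ, eqv2_refl γ, rfl⟩
  | @tail M L h1 h2 ih =>
    obtain ⟨δ, hE, hL⟩ := ih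
    cases h2 with
    | @not L₁ L₂ x bb =>
      have hlen : δ.len = L₁.length + 2 + L₂.length := by
        have h3 := congrArg List.length hL
        rw [wordList_length] at h3
        simp only [List.length_append, List.length_cons] at h3
        omega
      have e1 : letter emb (δ.toFun L₁.length) (δ.toFun (L₁.length + 1)) = (x, bb) := by
        rw [letter_bridge hL L₁.length (by omega) (by simp only [List.length_append, List.length_cons]; omega),
          getElem_append_cons_cons, dif_neg (by omega), dif_pos rfl]
      have e2 : letter emb (δ.toFun (L₁.length + 1)) (δ.toFun (L₁.length + 2)) = (x, !bb) := by
        rw [letter_bridge hL (L₁.length + 1) (by omega) (by simp only [List.length_append, List.length_cons]; omega),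
          getElem_append_cons_cons, dif_neg (by omega), dif_neg (by omega), dif_pos rfl]
      have hne : δ.toFun L₁.length ≠ δ.toFun (L₁.length + 1) :=
        fun he => hirr _ (he ▸ δ.adj L₁.length (by omega))
      have hk2 : δ.toFun (L₁.length + 2) = δ.toFun L₁.length := by
        apply letter_cancel hemb hne
        rw [e1]
        exact e2
      let δ' : Walk Hg a b :=
        { len := δ.len - 2
          toFun := fun i => if i ≤ L₁.length then δ.toFun i else δ.toFun (i + 2)
          start_eq := by simp [δ.start_eq]
          end_eq := by
            (try dsimp only)
            by_cases hc : δ.len - 2 ≤ L₁.length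
            · have h4 : δ.len - 2 = L₁.length := by omega
              rw [if_pos hc, h4, ← hk2, show L₁.length + 2 = δ.len by omega]
              exact δ.end_eq
            · rw [if_neg hc, show δ.len - 2 + 2 = δ.len by omega]
              exact δ.end_eq
          adj := by
            intro i hi
            (try dsimp only)
            by_cases hc1 : i + 1 ≤ L₁.length
            · rw [if_pos (by omega), if_pos hc1]
              exact δ.adj i (by omega)
            · rw [if_neg hc1]
              by_cases hc0 : i ≤ L₁.length
              · have h4 : i = L₁.length := by omega
                rw [if_pos hc0, h4, ← hk2]
                exact δ.adj (L₁.length + 2) (by omega)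
              · rw [if_neg hc0]
                exact δ.adj (i + 2) (by omega) }
      have hmove : MoveA δ' δ := by
        refine ⟨by show δ.len = δ.len - 2 + 2; omega, L₁.length,
          by show L₁.length ≤ δ.len - 2; omega, ?_, ?_⟩
        · intro i hi
          show δ.toFun i = if i ≤ L₁.length then δ.toFun i else δ.toFun (i + 2)
          rw [if_pos hi]
        · intro i hki hile
          show δ.toFun (i + 2) = if i ≤ L₁.length then δ.toFun i else δ.toFun (i + 2)
          by_cases hc : i ≤ L₁.length
          · have h4 : i = L₁.length := by omega
            rw [if_pos hc, h4, hk2]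
          · rw [if_neg hc]
      refine ⟨δ', eqv2_trans hE (eqv2_symm (Relation.EqvGen.rel _ _ (Or.inl hmove))), ?_⟩
      apply List.ext_getElem
      · rw [wordList_length]
        show δ.len - 2 = _
        simp only [List.length_append]
        omega
      intro i h1 h2
      have h1' : i < δ.len - 2 := by
        rw [wordList_length] at h1
        exact h1
      rw [wordList_getElem]
      show letter emb (if i ≤ L₁.length then δ.toFun i else δ.toFun (i + 2))
        (if i + 1 ≤ L₁.length then δ.toFun (i + 1) else δ.toFun (i + 1 + 2)) = _
      by_cases hc1 : i + 1 ≤ L₁.length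
      · rw [if_pos (by omega), if_pos hc1,
          letter_bridge hL i (by omega) (by simp only [List.length_append, List.length_cons]; omega),
          getElem_append_cons_cons, dif_pos (by omega),
          List.getElem_append_left (by omega)]
      · have hv1 : (if i ≤ L₁.length then δ.toFun i else δ.toFun (i + 2)) = δ.toFun (i + 2) := by
          by_cases hc0 : i ≤ L₁.length
          · have h4 : i = L₁.length := by omega
            rw [if_pos hc0, h4, hk2]
          · rw [if_neg hc0]
        rw [hv1, if_neg hc1,
          letter_bridge hL (i + 2) (by omega) (by simp only [List.length_append, List.length_cons]; omega),
          getElem_append_cons_cons, dif_neg (by omega), dif_neg (by omega),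
          dif_neg (by omega), List.getElem_append_right (by omega)]
        congr 1
        omega

theorem wordList_inj_eqv {a b : Hg.V} {γ δ : Walk Hg a b}
    (h : wordList emb γ = wordList emb δ) : Eqv2 γ δ := by
  have hlen : γ.len = δ.len := by
    have h3 := congrArg List.length h
    rwa [wordList_length, wordList_length] at h3
  apply eqv2_of_agree hlen
  intro i hi
  induction i with
  | zero => rw [γ.start_eq, δ.start_eq]
  | succ i ih =>
    have e : letter emb (γ.toFun i) (γ.toFun (i + 1)) =
        letter emb (δ.toFun i) (δ.toFun (i + 1)) := by
      rw [letter_bridge (emb := emb) h i (by omega) (by rw [wordList_length]; omega)]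
      exact wordList_getElem (emb := emb) δ i (by rw [wordList_length]; omega)
    rw [← ih (by omega)] at e
    exact letter_snd e

theorem wordOf_complete (hemb : Function.Injective emb) (hirr : ∀ x, ¬ Hg.E x x)
    {a b : Hg.V} {γ δ : Walk Hg a b} (h : wordOf emb γ = wordOf emb δ) : Eqv2 γ δ := by
  obtain ⟨L, r1, r2⟩ := FreeGroup.Red.exact.1 h
  obtain ⟨γ', e1, w1⟩ := red_real hemb hirr γ r1
  obtain ⟨δ', e2, w2⟩ := red_real hemb hirr δ r2
  exact eqv2_trans e1 (eqv2_trans (wordList_inj_eqv (w1.trans w2.symm)) (eqv2_symm e2))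

theorem wordList_concat {a b c : Hg.V} (γ : Walk Hg a b) (δ : Walk Hg b c) :
    wordList emb (γ.concat δ) = wordList emb γ ++ wordList emb δ := by
  apply List.ext_getElem
  · simp only [wordList_length, List.length_append]
    rfl
  intro i h1 h2
  have h1' : i < γ.len + δ.len := by
    rw [wordList_length] at h1
    exact h1
  rw [wordList_getElem]
  show letter emb (if i ≤ γ.len then γ.toFun i else δ.toFun (i - γ.len))
    (if i + 1 ≤ γ.len then γ.toFun (i + 1) else δ.toFun (i + 1 - γ.len)) = _
  by_cases hi : i < γ.len
  · rw [if_pos (by omega), if_pos (by omega),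
      List.getElem_append_left (by rw [wordList_length]; omega), wordList_getElem]
  · have hv : (if i ≤ γ.len then γ.toFun i else δ.toFun (i - γ.len)) =
        δ.toFun (i - γ.len) := by
      by_cases hc : i ≤ γ.len
      · have h4 : i = γ.len := by omega
        rw [if_pos hc, h4, Nat.sub_self, δ.start_eq, γ.end_eq]
      · rw [if_neg hc]
    rw [hv, if_neg (by omega),
      List.getElem_append_right (by rw [wordList_length]; omega), wordList_getElem]
    rw [wordList_length, show i + 1 - γ.len = i - γ.len + 1 by omega]

theorem wordOf_concat {a b c : Hg.V} (γ : Walk Hg a b) (δ : Walk Hg b c) :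
    wordOf emb (γ.concat δ) = wordOf emb γ * wordOf emb δ := by
  rw [wordOf, wordOf, wordOf, wordList_concat, FreeGroup.mul_mk]

theorem wordList_reverse (hemb : Function.Injective emb) (hirr : ∀ x, ¬ Hg.E x x)
    {a b : Hg.V} (γ : Walk Hg a b) :
    wordList emb γ.reverse = FreeGroup.invRev (wordList emb γ) := by
  have hm : FreeGroup.invRev (wordList emb γ) =
      ((wordList emb γ).map (fun g : (Hg.V × Hg.V) × Bool => (g.1, !g.2))).reverse := rfl
  rw [hm]
  apply List.ext_getElem
  · simp only [wordList_length, List.length_reverse, List.length_map]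
    rfl
  intro i h1 h2
  have h1' : i < γ.len := by
    rw [wordList_length] at h1
    exact h1
  rw [wordList_getElem]
  show letter emb (γ.toFun (γ.len - i)) (γ.toFun (γ.len - (i + 1))) = _
  rw [List.getElem_reverse, List.getElem_map, wordList_getElem]
  have hlen2 : (List.map (fun (g : (Hg.V × Hg.V) × Bool) => (g.1, !g.2))
      (wordList emb γ)).length = γ.len := by
    rw [List.length_map, wordList_length]
  rw [hlen2]
  have hml : γ.len - 1 - i < γ.len := by omega
  have hadj : Hg.E (γ.toFun (γ.len - 1 - i)) (γ.toFun (γ.len - 1 - i + 1)) := γ.adj _ hml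
  have hne : γ.toFun (γ.len - 1 - i) ≠ γ.toFun (γ.len - 1 - i + 1) :=
    fun he => hirr _ (he ▸ hadj)
  rw [show γ.len - i = γ.len - 1 - i + 1 by omega,
    show γ.len - (i + 1) = γ.len - 1 - i by omega]
  exact letter_flip hemb hne

theorem wordOf_reverse (hemb : Function.Injective emb) (hirr : ∀ x, ¬ Hg.E x x)
    {a b : Hg.V} (γ : Walk Hg a b) :
    wordOf emb γ.reverse = (wordOf emb γ)⁻¹ := by
  rw [wordOf, wordOf, wordList_reverse hemb hirr, ← FreeGroup.inv_mk]

theorem wordOf_const (x : Hg.V) : wordOf emb (constWalk x) = 1 := by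
  have h : wordList emb (constWalk x) = [] := by
    simp [wordList, constWalk]
  rw [wordOf, h, ← FreeGroup.one_eq_mk]

theorem wordOf_pow {a : Hg.V} (γ : Walk Hg a a) (n : ℕ) :
    wordOf emb (Walk.pow γ n) = (wordOf emb γ) ^ n := by
  induction n with
  | zero => exact wordOf_const a
  | succ n ih =>
    show wordOf emb ((Walk.pow γ n).concat γ) = _
    rw [wordOf_concat, ih, pow_succ]

theorem wordOf_zpow (hemb : Function.Injective emb) (hirr : ∀ x, ¬ Hg.E x x)
    {a : Hg.V} (γ : Walk Hg a a) (k : ℤ) :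
    wordOf emb (Walk.zpow γ k) = (wordOf emb γ) ^ k := by
  cases k with
  | ofNat n =>
    show wordOf emb (Walk.pow γ n) = _
    rw [wordOf_pow, Int.ofNat_eq_coe, zpow_natCast]
  | negSucc n =>
    show wordOf emb (Walk.pow γ.reverse (n + 1)) = _
    rw [wordOf_pow, wordOf_reverse hemb hirr, zpow_negSucc, inv_pow]

end Aux
namespace Aux

structure UH (Gg Hg : Graph') where
  h : Gg.V → ℕ → Hg.V
  adj : ∀ {x y : Gg.V} {i j : ℕ}, Gg.E x y → i ≤ j + 1 → j ≤ i + 1 → Hg.E (h x i) (h y j)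

variable {Gg Hg : Graph'} {emb : Hg.V → ℕ}

def UH.slice (u : UH Gg Hg) {a b : Gg.V} (p : Walk Gg a b) (i : ℕ) :
    Walk Hg (u.h a i) (u.h b i) where
  len := p.len
  toFun := fun j => u.h (p.toFun j) i
  start_eq := by (try dsimp only); rw [p.start_eq]
  end_eq := by (try dsimp only); rw [p.end_eq]
  adj := fun j hj => u.adj (p.adj j hj) (by omega) (by omega)

def UH.conn (u : UH Gg Hg) {a a' : Gg.V} (ha : Gg.E a a') (i : ℕ) :
    Walk Hg (u.h a i) (u.h a (i + 1)) where
  len := 2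
  toFun := fun j => if j = 0 then u.h a i else if j = 1 then u.h a' i else u.h a (i + 1)
  start_eq := rfl
  end_eq := rfl
  adj := by
    intro j hj
    match j, hj with
    | 0, _ => exact u.adj ha (by omega) (by omega)
    | 1, _ => exact u.adj (Gg.symm ha) (by omega) (by omega)

def UH.rwalk (u : UH Gg Hg) {v v' : Gg.V} (hv : Gg.E v v') (n : ℕ) :
    Walk Hg (u.h v 0) (u.h v n) where
  len := 2 * n
  toFun := fun j => if j % 2 = 0 then u.h v (j / 2) else u.h v' (j / 2)
  start_eq := by norm_num
  end_eq := by
    (try dsimp only)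
    rw [if_pos (by omega), show 2 * n / 2 = n by omega]
  adj := by
    intro j hj
    (try dsimp only)
    rcases Nat.even_or_odd j with he | ho
    · obtain ⟨t, ht⟩ := he
      rw [if_pos (by omega), if_neg (by omega), show (j + 1) / 2 = j / 2 by omega]
      exact u.adj hv (by omega) (by omega)
    · obtain ⟨t, ht⟩ := ho
      rw [if_neg (by omega), if_pos (by omega)]
      exact u.adj (Gg.symm hv) (by omega) (by omega)

theorem wordOf_len_zero {a b : Hg.V} (γ : Walk Hg a b) (h : γ.len = 0) :
    wordOf emb γ = 1 := by
  have h2 : wordList emb γ = [] := by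
    unfold wordList
    rw [h]
    rfl
  rw [wordOf, h2, ← FreeGroup.one_eq_mk]

variable (hemb : Function.Injective emb) (hirr : ∀ x, ¬ Hg.E x x)
  (hsq : ¬ ∃ a b c d : Hg.V, a ≠ b ∧ a ≠ c ∧ a ≠ d ∧ b ≠ c ∧ b ≠ d ∧ c ≠ d ∧
      Hg.E a b ∧ Hg.E b c ∧ Hg.E c d ∧ Hg.E d a)

include hemb hirr hsq

theorem commStep (u : UH Gg Hg) : ∀ (m : ℕ) {a b : Gg.V} (p : Walk Gg a b), p.len = m →
    ∀ {a' b' : Gg.V} (ha : Gg.E a a') (hb : Gg.E b b') (i : ℕ),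
    wordOf emb (u.slice p i) * wordOf emb (u.conn hb i) =
      wordOf emb (u.conn ha i) * wordOf emb (u.slice p (i + 1)) := by
  intro m
  induction m with
  | zero =>
    intro a b p hm a' b' ha hb i
    have hab : a = b := by rw [← p.start_eq, ← hm, p.end_eq]
    subst hab
    rw [wordOf_len_zero (u.slice p i) hm, wordOf_len_zero (u.slice p (i+1)) hm,
      one_mul, mul_one]
    apply wordOf_moveB hemb hirr hsq
    refine ⟨rfl, 1, ?_⟩
    intro j hj hne
    match j, hj, hne with
    | 0, _, _ => rfl
    | 1, _, hne => exact absurd rfl hne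
    | 2, _, _ => rfl
  | succ m ih =>
    intro a b p hm a' b' ha hb i
    have hcb : Gg.E (p.toFun m) b := by
      have h2 := p.adj m (by omega)
      rwa [show m + 1 = p.len by omega, p.end_eq] at h2
    let q : Walk Gg a (p.toFun m) := ⟨m, p.toFun, p.start_eq, rfl, fun j hj => p.adj j (by omega)⟩
    let ew : Walk Gg (p.toFun m) b :=
      ⟨1, fun j => if j = 0 then p.toFun m else b, rfl, rfl, by
        intro j hj
        match j, hj with
        | 0, _ => exact hcb⟩
    have hsplit : ∀ t : ℕ, wordOf emb (u.slice p t) =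
        wordOf emb (u.slice q t) * wordOf emb (u.slice ew t) := by
      intro t
      rw [← wordOf_concat]
      apply congrArg FreeGroup.mk
      apply wordList_eq_of_agree
      · show p.len = m + 1
        omega
      · intro j hj
        show u.h (p.toFun j) t =
          if j ≤ m then u.h (q.toFun j) t else (u.slice ew t).toFun (j - m)
        by_cases hjm : j ≤ m
        · rw [if_pos hjm]
        · rw [if_neg hjm]
          have hj1 : j = m + 1 := by
            have : j ≤ p.len := hj
            omega
          rw [hj1, show m + 1 - m = 1 by omega]
          show u.h (p.toFun (m+1)) t = u.h (ew.toFun 1) t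
          rw [show m + 1 = p.len by omega, p.end_eq]
          rfl
    have hkey : wordOf emb (u.slice ew i) * wordOf emb (u.conn hb i) =
        wordOf emb (u.conn hcb i) * wordOf emb (u.slice ew (i + 1)) := by
      rw [← wordOf_concat, ← wordOf_concat]
      apply wordOf_moveB hemb hirr hsq
      refine ⟨rfl, 2, ?_⟩
      intro j hj hne
      match j, hj, hne with
      | 0, _, _ => rfl
      | 1, _, _ => rfl
      | 2, _, hne => exact absurd rfl hne
      | 3, _, _ => rfl
    have IH := ih q rfl ha hcb i
    rw [hsplit i, hsplit (i+1), mul_assoc, hkey, ← mul_assoc, IH, mul_assoc]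

theorem commAll (u : UH Gg Hg) {v v' : Gg.V} (hv : Gg.E v v') (γ : Walk Gg v v) :
    ∀ n, wordOf emb (u.slice γ 0) * wordOf emb (u.rwalk hv n) =
      wordOf emb (u.rwalk hv n) * wordOf emb (u.slice γ n) := by
  intro n
  induction n with
  | zero =>
    rw [wordOf_len_zero (u.rwalk hv 0) (by show 2 * 0 = 0; omega), one_mul, mul_one]
  | succ n ihn =>
    have hr : wordOf emb (u.rwalk hv (n+1)) =
        wordOf emb (u.rwalk hv n) * wordOf emb (u.conn hv n) := by
      rw [← wordOf_concat]
      apply congrArg FreeGroup.mk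
      apply wordList_eq_of_agree
      · show 2 * (n + 1) = 2 * n + 2
        omega
      · intro j hj
        have hj' : j ≤ 2 * (n + 1) := hj
        show (if j % 2 = 0 then u.h v (j / 2) else u.h v' (j / 2)) =
          if j ≤ 2 * n then (u.rwalk hv n).toFun j else (u.conn hv n).toFun (j - 2 * n)
        by_cases hc : j ≤ 2 * n
        · rw [if_pos hc]
          rfl
        · rw [if_neg hc]
          rcases (by omega : j = 2 * n + 1 ∨ j = 2 * n + 2) with h | h <;> rw [h]
          · rw [if_neg (by omega), show (2 * n + 1) / 2 = n by omega,
              show 2 * n + 1 - 2 * n = 1 by omega]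
            rfl
          · rw [if_pos (by omega), show (2 * n + 2) / 2 = n + 1 by omega,
              show 2 * n + 2 - 2 * n = 2 by omega]
            rfl
    rw [hr, ← mul_assoc, ihn, mul_assoc, commStep hemb hirr hsq u γ.len γ rfl hv hv n,
      ← mul_assoc]

theorem wordOf_evenSwap {a b : Hg.V} {γ δ : Walk Hg a b} (hlen : γ.len = δ.len)
    (hev : ∀ j ≤ γ.len, j % 2 = 0 → γ.toFun j = δ.toFun j) :
    wordOf emb γ = wordOf emb δ := by
  let M : ℕ → Walk Hg a b := fun t =>
    { len := γ.len
      toFun := fun j => if j < t then δ.toFun j else γ.toFun j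
      start_eq := by
        (try dsimp only)
        by_cases h0 : 0 < t
        · rw [if_pos h0, δ.start_eq]
        · rw [if_neg h0, γ.start_eq]
      end_eq := by
        (try dsimp only)
        by_cases hl : γ.len < t
        · rw [if_pos hl]
          have h2 : δ.toFun γ.len = b := by rw [hlen, δ.end_eq]
          exact h2
        · rw [if_neg hl, γ.end_eq]
      adj := by
        intro j hj
        (try dsimp only)
        by_cases h1 : j + 1 < t
        · rw [if_pos (by omega), if_pos h1]
          exact δ.adj j (by omega)
        · rw [if_neg h1]
          by_cases h2 : j < t
          · rw [if_pos h2]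
            rcases Nat.even_or_odd j with hev2 | hod
            · have he : γ.toFun j = δ.toFun j :=
                hev j (by omega) (by obtain ⟨s, hs⟩ := hev2; omega)
              rw [← he]
              exact γ.adj j hj
            · have he : γ.toFun (j+1) = δ.toFun (j+1) :=
                hev (j+1) (by omega) (by obtain ⟨s, hs⟩ := hod; omega)
              rw [he]
              exact δ.adj j (by omega)
          · rw [if_neg h2]
            exact γ.adj j hj }
  have hM : ∀ t, wordOf emb γ = wordOf emb (M t) := by
    intro t
    induction t with
    | zero =>
      apply congrArg FreeGroup.mk
      apply wordList_eq_of_agree rfl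
      intro j hj
      show γ.toFun j = if j < 0 then δ.toFun j else γ.toFun j
      rw [if_neg (by omega)]
    | succ t iht =>
      refine iht.trans (wordOf_moveB hemb hirr hsq ⟨rfl, t, ?_⟩)
      intro j hj hne
      show (if j < t then δ.toFun j else γ.toFun j) = if j < t + 1 then δ.toFun j else γ.toFun j
      by_cases hc : j < t
      · rw [if_pos hc, if_pos (by omega)]
      · rw [if_neg hc, if_neg (by omega)]
  rw [hM (γ.len + 1)]
  apply congrArg FreeGroup.mk
  apply wordList_eq_of_agree
  · show γ.len = δ.len
    exact hlen
  · intro j hj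
    have hj' : j ≤ γ.len := hj
    show (if j < γ.len + 1 then δ.toFun j else γ.toFun j) = δ.toFun j
    rw [if_pos (by omega)]

end Aux
namespace Aux

variable {Gg Hg : Graph'} {emb : Hg.V → ℕ}

def uhOf {n : ℕ} (h : (prodI Gg n).V → Hg.V) (hh : IsGraphHom (prodI Gg n) Hg h) :
    UH Gg Hg where
  h := fun x i => h (x, finClip n i)
  adj := by
    intro x y i j hxy hij hji
    apply hh
    refine ⟨hxy, ?_, ?_⟩
    · show min i n ≤ min j n + 1
      omega
    · show min j n ≤ min i n + 1
      omega

theorem wordOf_realizedWalk {n : ℕ} (h : (prodI Gg n).V → Hg.V)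
    (hh : IsGraphHom (prodI Gg n) Hg h) {v v' : Gg.V} (hvv' : Gg.E v v')
    {w : Hg.V} (h0 : h (v, finClip n 0) = w) (hN : h (v, finClip n n) = w) :
    wordOf emb (realizedWalk h hh hvv' h0 hN) = wordOf emb ((uhOf h hh).rwalk hvv' n) := by
  apply congrArg FreeGroup.mk
  apply wordList_eq_of_agree
  · rfl
  · intro j hj
    rfl

theorem wordOf_slice_eq_map {n : ℕ} (h : (prodI Gg n).V → Hg.V)
    (hh : IsGraphHom (prodI Gg n) Hg h) (f : Gg.V → Hg.V) (hf : IsGraphHom Gg Hg f)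
    {a b : Gg.V} (γ : Walk Gg a b) (i : ℕ) (hsl : ∀ x, h (x, finClip n i) = f x) :
    wordOf emb ((uhOf h hh).slice γ i) = wordOf emb (Walk.map f hf γ) := by
  apply congrArg FreeGroup.mk
  apply wordList_eq_of_agree
  · rfl
  · intro j hj
    exact hsl (γ.toFun j)

theorem wordList_split {a b a1 b1 a2 b2 : Hg.V} (γ : Walk Hg a b) (γ1 : Walk Hg a1 b1)
    (γ2 : Walk Hg a2 b2) (hlen : γ.len = γ1.len + γ2.len)
    (h1 : ∀ j ≤ γ1.len, γ.toFun j = γ1.toFun j)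
    (h2 : ∀ j ≤ γ2.len, γ.toFun (γ1.len + j) = γ2.toFun j) :
    wordList emb γ = wordList emb γ1 ++ wordList emb γ2 := by
  apply List.ext_getElem
  · simp only [wordList_length, List.length_append, hlen]
  intro i hx hy
  have hx' : i < γ1.len + γ2.len := by rwa [wordList_length, hlen] at hx
  rw [wordList_getElem]
  by_cases hc : i < γ1.len
  · rw [List.getElem_append_left (by rw [wordList_length]; omega), wordList_getElem,
      h1 i (by omega), h1 (i+1) (by omega)]
  · rw [List.getElem_append_right (by rw [wordList_length]; omega), wordList_getElem,
      wordList_length]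
    have e1 : γ.toFun i = γ2.toFun (i - γ1.len) := by
      have h3 := h2 (i - γ1.len) (by omega)
      rwa [show γ1.len + (i - γ1.len) = i by omega] at h3
    have e2 : γ.toFun (i + 1) = γ2.toFun (i - γ1.len + 1) := by
      have h3 := h2 (i - γ1.len + 1) (by omega)
      rwa [show γ1.len + (i - γ1.len + 1) = i + 1 by omega] at h3
    rw [e1, e2]

section stack

variable {n1 n2 : ℕ} (h1 : (prodI Gg n1).V → Hg.V) (h2 : (prodI Gg n2).V → Hg.V)

def stackH : (prodI Gg (n1 + n2)).V → Hg.V :=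
  fun p => if p.2.val ≤ n1 then h1 (p.1, finClip n1 p.2.val)
    else h2 (p.1, finClip n2 (p.2.val - n1))

variable (f : Gg.V → Hg.V)
  (hh1 : IsGraphHom (prodI Gg n1) Hg h1) (hh2 : IsGraphHom (prodI Gg n2) Hg h2)
  (he1 : ∀ x, h1 (x, finClip n1 n1) = f x) (hs2 : ∀ x, h2 (x, finClip n2 0) = f x)

include hh1 hh2 he1 hs2 in
theorem stackH_isHom : IsGraphHom (prodI Gg (n1 + n2)) Hg (stackH h1 h2) := by
  rintro ⟨x, i⟩ ⟨y, j⟩ ⟨hxy, hij, hji⟩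
  have hij' : (i : ℕ) ≤ (j : ℕ) + 1 := hij
  have hji' : (j : ℕ) ≤ (i : ℕ) + 1 := hji
  have hi3 := i.isLt
  have hj4 := j.isLt
  clear hij hji
  have hi2 : i.val ≤ n1 + n2 := by omega
  have hj2 : j.val ≤ n1 + n2 := by omega
  show Hg.E (if i.val ≤ n1 then h1 (x, finClip n1 i.val) else h2 (x, finClip n2 (i.val - n1)))
    (if j.val ≤ n1 then h1 (y, finClip n1 j.val) else h2 (y, finClip n2 (j.val - n1)))
  by_cases hi : i.val ≤ n1 <;> by_cases hj3 : j.val ≤ n1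
  · rw [if_pos hi, if_pos hj3]
    refine hh1 ⟨hxy, ?_, ?_⟩
    · show min i.val n1 ≤ min j.val n1 + 1
      omega
    · show min j.val n1 ≤ min i.val n1 + 1
      omega
  · rw [if_pos hi, if_neg hj3]
    have hiv : i.val = n1 := by omega
    have hjv : j.val - n1 = 1 := by omega
    rw [hiv, hjv, he1 x, ← hs2 x]
    refine hh2 ⟨hxy, ?_, ?_⟩
    · show min 0 n2 ≤ min 1 n2 + 1
      omega
    · show min 1 n2 ≤ min 0 n2 + 1
      omega
  · rw [if_neg hi, if_pos hj3]
    have hjv : j.val = n1 := by omega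
    have hiv : i.val - n1 = 1 := by omega
    rw [hjv, hiv, he1 y, ← hs2 y]
    refine hh2 ⟨hxy, ?_, ?_⟩
    · show min 1 n2 ≤ min 0 n2 + 1
      omega
    · show min 0 n2 ≤ min 1 n2 + 1
      omega
  · rw [if_neg hi, if_neg hj3]
    refine hh2 ⟨hxy, ?_, ?_⟩
    · show min (i.val - n1) n2 ≤ min (j.val - n1) n2 + 1
      omega
    · show min (j.val - n1) n2 ≤ min (i.val - n1) n2 + 1
      omega

include he1 hs2 in
theorem stackH_val (x : Gg.V) (t : ℕ) (ht : t ≤ n1 + n2) :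
    stackH h1 h2 (x, finClip (n1 + n2) t) =
      if t ≤ n1 then h1 (x, finClip n1 t) else h2 (x, finClip n2 (t - n1)) := by
  show (if min t (n1 + n2) ≤ n1 then h1 (x, finClip n1 (min t (n1 + n2)))
    else h2 (x, finClip n2 (min t (n1 + n2) - n1))) = _
  rw [show min t (n1 + n2) = t by omega]

include hh1 hh2 he1 hs2 in
theorem stackH_word (hstack : IsGraphHom (prodI Gg (n1 + n2)) Hg (stackH h1 h2))
    {v v' : Gg.V} (hv : Gg.E v v') :
    wordOf emb ((uhOf (stackH h1 h2) hstack).rwalk hv (n1 + n2)) =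
      wordOf emb ((uhOf h1 hh1).rwalk hv n1) * wordOf emb ((uhOf h2 hh2).rwalk hv n2) := by
  rw [wordOf, wordOf, wordOf, FreeGroup.mul_mk]
  apply congrArg FreeGroup.mk
  apply wordList_split
  · show 2 * (n1 + n2) = 2 * n1 + 2 * n2
    omega
  · intro j hj
    have hj' : j ≤ 2 * n1 := hj
    show (if j % 2 = 0 then stackH h1 h2 (v, finClip (n1+n2) (j/2))
        else stackH h1 h2 (v', finClip (n1+n2) (j/2))) =
      if j % 2 = 0 then h1 (v, finClip n1 (j/2)) else h1 (v', finClip n1 (j/2))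
    by_cases hp : j % 2 = 0
    · rw [if_pos hp, if_pos hp, stackH_val h1 h2 f he1 hs2 v (j/2) (by omega),
        if_pos (by omega)]
    · rw [if_neg hp, if_neg hp, stackH_val h1 h2 f he1 hs2 v' (j/2) (by omega),
        if_pos (by omega)]
  · intro j hj
    have hj' : j ≤ 2 * n2 := hj
    have hpar : (2 * n1 + j) % 2 = j % 2 := by omega
    have hdiv : (2 * n1 + j) / 2 = n1 + j / 2 := by omega
    show (if (2 * n1 + j) % 2 = 0 then stackH h1 h2 (v, finClip (n1+n2) ((2 * n1 + j)/2))
        else stackH h1 h2 (v', finClip (n1+n2) ((2 * n1 + j)/2))) =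
      if j % 2 = 0 then h2 (v, finClip n2 (j/2)) else h2 (v', finClip n2 (j/2))
    rw [hpar, hdiv]
    by_cases hp : j % 2 = 0
    · rw [if_pos hp, if_pos hp, stackH_val h1 h2 f he1 hs2 v (n1 + j/2) (by omega)]
      by_cases hz : j / 2 = 0
      · rw [if_pos (by omega), show n1 + j / 2 = n1 by omega, he1 v, ← hs2 v,
          show j / 2 = 0 from hz]
      · rw [if_neg (by omega), show n1 + j / 2 - n1 = j / 2 by omega]
    · rw [if_neg hp, if_neg hp, stackH_val h1 h2 f he1 hs2 v' (n1 + j/2) (by omega)]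
      by_cases hz : j / 2 = 0
      · rw [if_pos (by omega), show n1 + j / 2 = n1 by omega, he1 v', ← hs2 v',
          show j / 2 = 0 from hz]
      · rw [if_neg (by omega), show n1 + j / 2 - n1 = j / 2 by omega]

end stack

section rev

variable {n : ℕ} (h : (prodI Gg n).V → Hg.V) (hh : IsGraphHom (prodI Gg n) Hg h)

def revH : (prodI Gg n).V → Hg.V := fun p => h (p.1, finClip n (n - p.2.val))

include hh in
theorem revH_isHom : IsGraphHom (prodI Gg n) Hg (revH h) := by
  rintro ⟨x, i⟩ ⟨y, j⟩ ⟨hxy, hij, hji⟩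
  have hij' : (i : ℕ) ≤ (j : ℕ) + 1 := hij
  have hji' : (j : ℕ) ≤ (i : ℕ) + 1 := hji
  have hi3 := i.isLt
  have hj4 := j.isLt
  clear hij hji
  refine hh ⟨hxy, ?_, ?_⟩
  · show min (n - i.val) n ≤ min (n - j.val) n + 1
    omega
  · show min (n - j.val) n ≤ min (n - i.val) n + 1
    omega

theorem revH_word (hemb : Function.Injective emb) (hirr : ∀ x, ¬ Hg.E x x)
    (hsq : ¬ ∃ a b c d : Hg.V, a ≠ b ∧ a ≠ c ∧ a ≠ d ∧ b ≠ c ∧ b ≠ d ∧ c ≠ d ∧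
      Hg.E a b ∧ Hg.E b c ∧ Hg.E c d ∧ Hg.E d a)
    (hrev : IsGraphHom (prodI Gg n) Hg (revH h))
    {v v' : Gg.V} (hv : Gg.E v v') :
    wordOf emb ((uhOf (revH h) hrev).rwalk hv n) =
      (wordOf emb ((uhOf h hh).rwalk hv n))⁻¹ := by
  set u := uhOf h hh with hu
  let R : Walk Hg (u.h v n) (u.h v 0) :=
    { len := 2 * n
      toFun := fun j => if j % 2 = 0 then u.h v (n - j / 2) else u.h v' (n - j / 2)
      start_eq := by norm_num
      end_eq := by
        (try dsimp only)
        rw [if_pos (by omega), show 2 * n / 2 = n by omega, Nat.sub_self]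
      adj := by
        intro j hj
        (try dsimp only)
        rcases Nat.even_or_odd j with he | ho
        · obtain ⟨t, ht⟩ := he
          rw [if_pos (by omega), if_neg (by omega), show (j + 1) / 2 = j / 2 by omega]
          exact u.adj hv (by omega) (by omega)
        · obtain ⟨t, ht⟩ := ho
          rw [if_neg (by omega), if_pos (by omega)]
          exact u.adj (Gg.symm hv) (by omega) (by omega) }
  have h1 : wordOf emb ((uhOf (revH h) hrev).rwalk hv n) = wordOf emb R := by
    apply congrArg FreeGroup.mk
    apply wordList_eq_of_agree
    · rfl
    · intro j hj
      have hj' : j ≤ 2 * n := hj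
      show (if j % 2 = 0 then h (v, finClip n (n - min (j/2) n))
          else h (v', finClip n (n - min (j/2) n))) =
        if j % 2 = 0 then u.h v (n - j / 2) else u.h v' (n - j / 2)
      rw [show n - min (j/2) n = n - j/2 by omega]
      rfl
  have h2 : wordOf emb R = wordOf emb ((u.rwalk hv n).reverse) := by
    apply wordOf_evenSwap hemb hirr hsq
    · rfl
    · intro j hj hp
      have hj' : j ≤ 2 * n := hj
      show (if j % 2 = 0 then u.h v (n - j / 2) else u.h v' (n - j / 2)) =
        (u.rwalk hv n).toFun (2 * n - j)
      rw [if_pos hp]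
      show _ = if (2 * n - j) % 2 = 0 then u.h v ((2 * n - j) / 2) else u.h v' ((2 * n - j) / 2)
      rw [if_pos (by omega), show (2 * n - j) / 2 = n - j / 2 by omega]
  rw [h1, h2, wordOf_reverse hemb hirr]

end rev

theorem rwalk_nbr (hemb : Function.Injective emb) (hirr : ∀ x, ¬ Hg.E x x)
    (hsq : ¬ ∃ a b c d : Hg.V, a ≠ b ∧ a ≠ c ∧ a ≠ d ∧ b ≠ c ∧ b ≠ d ∧ c ≠ d ∧
      Hg.E a b ∧ Hg.E b c ∧ Hg.E c d ∧ Hg.E d a)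
    (u : UH Gg Hg) {v v1 v2 : Gg.V} (hv1 : Gg.E v v1) (hv2 : Gg.E v v2) (n : ℕ) :
    wordOf emb (u.rwalk hv1 n) = wordOf emb (u.rwalk hv2 n) := by
  apply wordOf_evenSwap hemb hirr hsq
  · rfl
  · intro j hj hp
    show (if j % 2 = 0 then u.h v (j / 2) else u.h v1 (j / 2)) =
      if j % 2 = 0 then u.h v (j / 2) else u.h v2 (j / 2)
    rw [if_pos hp, if_pos hp]

end Aux
namespace Aux

theorem list_cons_eq_append {α : Type*} : ∀ (L : List α) (x : α),
    x :: L = L ++ [x] → ∀ y ∈ L, y = x := by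
  intro L
  induction L with
  | nil => intro x h y hy; cases hy
  | cons z L ih =>
    intro x h y hy
    injection h with h1 h2
    rcases List.mem_cons.mp hy with rfl | hy2
    · exact h1.symm
    · rw [← h1] at h2
      exact ih x h2 y hy2

theorem invRev_cons {α : Type*} (x : α × Bool) (M : List (α × Bool)) :
    FreeGroup.invRev (x :: M) = FreeGroup.invRev M ++ [(x.1, !x.2)] := by
  simp [FreeGroup.invRev]

theorem freegroup_empty {ι : Type*} (hι : IsEmpty ι) (x : FreeGroup ι) : x = 1 := by
  conv_lhs => rw [← FreeGroup.mk_toWord (x := x)]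
  cases hx : x.toWord with
  | nil => exact FreeGroup.one_eq_mk.symm
  | cons p _ => exact (hι.false p.1).elim

theorem of_inv_mk {ι : Type*} (d : ι) :
    (FreeGroup.of d)⁻¹ = FreeGroup.mk [(d, false)] := by
  calc (FreeGroup.of d)⁻¹ = FreeGroup.mk (FreeGroup.invRev [(d, true)]) := FreeGroup.inv_mk
  _ = FreeGroup.mk [(d, false)] := by
      congr 1

theorem commute_of_gen {ι : Type*} [DecidableEq ι] (c : ι) :
    ∀ (m : ℕ) (z : FreeGroup ι), z.toWord.length = m →
      z * FreeGroup.of c = FreeGroup.of c * z → ∃ s : ℤ, z = FreeGroup.of c ^ s := by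
  intro m
  induction m using Nat.strong_induction_on with
  | _ m ih =>
    intro z hm hcomm
    match hw : z.toWord with
    | [] => exact ⟨0, by rw [zpow_zero, FreeGroup.toWord_eq_nil_iff.mp hw]⟩
    | (d, bb) :: rest =>
      have hz : z = FreeGroup.mk ((d, bb) :: rest) := by rw [← hw, FreeGroup.mk_toWord]
      have hml : rest.length + 1 = m := by
        rw [← hm, hw, List.length_cons]
      have hrest_red : ∀ z' : FreeGroup ι, z' = FreeGroup.mk rest →
          z' * FreeGroup.of c = FreeGroup.of c * z' → ∃ s : ℤ, z' = FreeGroup.of c ^ s := by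
        intro z' hz' hcomm'
        apply ih z'.toWord.length _ z' rfl hcomm'
        have h2 : z'.toWord = FreeGroup.reduce rest := by rw [hz', FreeGroup.toWord_mk]
        have h3 := FreeGroup.Red.length_le (FreeGroup.reduce.red (L := rest))
        rw [h2]
        omega
      by_cases hdc : d = c
      · subst hdc
        cases bb with
        | true =>
          have hz' : (FreeGroup.of d)⁻¹ * z = FreeGroup.mk rest := by
            rw [hz, of_inv_mk, FreeGroup.mul_mk]
            exact Quot.sound FreeGroup.Red.Step.cons_not
          have hcomm' : ((FreeGroup.of d)⁻¹ * z) * FreeGroup.of d =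
              FreeGroup.of d * ((FreeGroup.of d)⁻¹ * z) := by
            have h4 : (FreeGroup.of d)⁻¹ * z * FreeGroup.of d = z := by
              rw [mul_assoc, hcomm, ← mul_assoc, inv_mul_cancel, one_mul]
            rw [h4]
            exact (mul_inv_cancel_left _ _).symm
          obtain ⟨s, hs⟩ := hrest_red _ hz' hcomm'
          refine ⟨1 + s, ?_⟩
          rw [zpow_add, zpow_one, ← hs]
          exact (mul_inv_cancel_left _ _).symm
        | false =>
          have hz' : FreeGroup.of d * z = FreeGroup.mk rest := by
            rw [hz, show FreeGroup.of d = FreeGroup.mk [(d, true)] from rfl,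
              FreeGroup.mul_mk]
            have : FreeGroup.Red.Step ((d, true) :: (d, !true) :: rest) rest :=
              FreeGroup.Red.Step.cons_not
            exact Quot.sound this
          have hcomm' : (FreeGroup.of d * z) * FreeGroup.of d =
              FreeGroup.of d * (FreeGroup.of d * z) := by
            rw [mul_assoc, hcomm]
          obtain ⟨s, hs⟩ := hrest_red _ hz' hcomm'
          refine ⟨-1 + s, ?_⟩
          rw [zpow_add, ← hs, zpow_neg_one]
          exact (inv_mul_cancel_left _ _).symm
      · exfalso
        have hzw : FreeGroup.reduce z.toWord = z.toWord := FreeGroup.reduce_toWord z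
        -- left multiplication
        have hLHS : (FreeGroup.of c * z).toWord = (c, true) :: z.toWord := by
          have h1 : FreeGroup.of c * z = FreeGroup.mk ((c, true) :: z.toWord) := by
            conv_lhs => rw [← FreeGroup.mk_toWord (x := z)]
            rw [show FreeGroup.of c = FreeGroup.mk [(c, true)] from rfl, FreeGroup.mul_mk]
            rfl
          rw [h1, FreeGroup.toWord_mk, FreeGroup.reduce.cons, hzw, hw]
          show (if c = d ∧ true = !bb then rest else (c, true) :: (d, bb) :: rest) = _
          rw [if_neg (fun hcd => hdc hcd.1.symm), ← hw]
        -- inverse of right multiplication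
        have hzinv : z⁻¹ = FreeGroup.mk (FreeGroup.invRev z.toWord) := by
          conv_lhs => rw [← FreeGroup.mk_toWord (x := z)]
          exact FreeGroup.inv_mk
        have hRinv : (z * FreeGroup.of c)⁻¹ =
            FreeGroup.mk ((c, false) :: FreeGroup.invRev z.toWord) := by
          rw [mul_inv_rev, of_inv_mk, hzinv, FreeGroup.mul_mk]
          rfl
        have hredinv : FreeGroup.reduce (FreeGroup.invRev z.toWord) =
            FreeGroup.invRev z.toWord := by
          rw [FreeGroup.reduce_invRev, hzw]
        -- case on the head of invRev z.toWord
        cases hiw : FreeGroup.invRev z.toWord with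
        | nil =>
          have : z.toWord.length = 0 := by
            have := congrArg List.length hiw
            rwa [FreeGroup.invRev_length] at this
          rw [hw] at this
          simp at this
        | cons q iw' =>
          have hlen_eq : (z * FreeGroup.of c).toWord.length =
              ((z * FreeGroup.of c)⁻¹).toWord.length := by
            rw [FreeGroup.toWord_inv, FreeGroup.invRev_length]
          have hLHSlen : (FreeGroup.of c * z).toWord.length = m + 1 := by
            rw [hLHS, List.length_cons, hm]
          have hinvword : ((z * FreeGroup.of c)⁻¹).toWord =
              if c = q.1 ∧ false = !q.2 then iw' else (c, false) :: q :: iw' := by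
            rw [hRinv, FreeGroup.toWord_mk, FreeGroup.reduce.cons, hredinv, hiw]
          by_cases hq : c = q.1 ∧ false = !q.2
          · rw [if_pos hq] at hinvword
            have h5 : iw'.length + 1 = m := by
              have := congrArg List.length hiw
              rw [FreeGroup.invRev_length, hm, List.length_cons] at this
              omega
            have h6 : ((z * FreeGroup.of c)⁻¹).toWord.length = m - 1 := by
              rw [hinvword]; omega
            have h10 : (z * FreeGroup.of c).toWord.length = m + 1 := by
              rw [hcomm, hLHSlen]
            omega
          · rw [if_neg hq] at hinvword
            have h7 : (z * FreeGroup.of c).toWord =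
                FreeGroup.invRev (((z * FreeGroup.of c)⁻¹).toWord) := by
              rw [FreeGroup.toWord_inv, FreeGroup.invRev_invRev]
            rw [hinvword, ← hiw] at h7
            rw [invRev_cons, FreeGroup.invRev_invRev] at h7
            have h8 : (c, true) :: z.toWord = z.toWord ++ [(c, true)] := by
              rw [← hLHS, ← hcomm]
              exact h7
            have h9 := list_cons_eq_append z.toWord (c, true) h8 (d, bb)
              (by rw [hw]; exact List.mem_cons_self)
            exact hdc (congrArg Prod.fst h9)

theorem gen_eq_of_center {ι : Type*} [DecidableEq ι] (z : FreeGroup ι) (hz : z ≠ 1)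
    (hcen : ∀ x, x * z = z * x) (a b : ι) : a = b := by
  obtain ⟨s, hs⟩ := commute_of_gen a z.toWord.length z rfl (hcen (FreeGroup.of a)).symm
  obtain ⟨t, ht⟩ := commute_of_gen b z.toWord.length z rfl (hcen (FreeGroup.of b)).symm
  by_contra hab
  have hs0 : s ≠ 0 := by
    rintro rfl
    rw [zpow_zero] at hs
    exact hz hs
  let k : FreeGroup ι →* Multiplicative ℤ :=
    FreeGroup.lift (fun x => Multiplicative.ofAdd (if x = a then (1 : ℤ) else 0))
  have h1 : k z = Multiplicative.ofAdd s := by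
    rw [hs, map_zpow, FreeGroup.lift_apply_of, if_pos rfl, ← ofAdd_zsmul, smul_eq_mul, mul_one]
  have h2 : k z = Multiplicative.ofAdd 0 := by
    rw [ht, map_zpow, FreeGroup.lift_apply_of, if_neg (fun h => hab h.symm), ← ofAdd_zsmul,
      smul_zero]
  rw [h1] at h2
  exact hs0 (Multiplicative.ofAdd.injective h2)

theorem freegroup_subsingleton_gen {ι : Type*} [Subsingleton ι] (a : ι) (x : FreeGroup ι) :
    ∃ s : ℤ, FreeGroup.of a ^ s = x := by
  have hmem : ∀ y : FreeGroup ι, y ∈ Subgroup.zpowers (FreeGroup.of a) := by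
    intro y
    let φ : FreeGroup ι →* Subgroup.zpowers (FreeGroup.of a) :=
      FreeGroup.lift (fun _ => ⟨FreeGroup.of a, Subgroup.mem_zpowers _⟩)
    have hφ : (Subgroup.zpowers (FreeGroup.of a)).subtype.comp φ = MonoidHom.id _ := by
      apply FreeGroup.ext_hom
      intro x
      show ((FreeGroup.lift (fun _ => (⟨FreeGroup.of a, Subgroup.mem_zpowers _⟩ :
        Subgroup.zpowers (FreeGroup.of a))) (FreeGroup.of x) : Subgroup.zpowers (FreeGroup.of a)) :
        FreeGroup ι) = FreeGroup.of x
      rw [FreeGroup.lift_apply_of]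
      show FreeGroup.of a = FreeGroup.of x
      rw [Subsingleton.elim x a]
    have h2 := congrArg (fun (ψ : FreeGroup ι →* FreeGroup ι) => ψ y) hφ
    simp only [MonoidHom.coe_comp, Function.comp_apply, MonoidHom.id_apply] at h2
    rw [← h2]
    exact ((φ y) : Subgroup.zpowers (FreeGroup.of a)).2
  exact Subgroup.mem_zpowers_iff.mp (hmem x)

theorem freegroup_gen_pow_inj {ι : Type*} (a : ι) {s t : ℤ}
    (h : FreeGroup.of a ^ s = FreeGroup.of a ^ t) : s = t := by
  let k : FreeGroup ι →* Multiplicative ℤ :=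
    FreeGroup.lift (fun _ : ι => Multiplicative.ofAdd (1 : ℤ))
  have h2 := congrArg k h
  rw [map_zpow, map_zpow, FreeGroup.lift_apply_of, ← ofAdd_zsmul, ← ofAdd_zsmul] at h2
  have h3 := Multiplicative.ofAdd.injective h2
  simpa using h3

theorem cyclic_of_center {S : Type} (D : Subgroup (FreeGroup S)) (g : FreeGroup S)
    (hgD : g ∈ D) (hg1 : g ≠ 1) (hcen : ∀ x ∈ D, x * g = g * x) :
    ∃ z₁ : D, (∀ x : D, ∃ s : ℤ, z₁ ^ s = x) ∧ (∀ s t : ℤ, z₁ ^ s = z₁ ^ t → s = t) := by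
  let e : ↥D ≃* FreeGroup (IsFreeGroup.Generators ↥D) := IsFreeGroup.toFreeGroup ↥D
  letI : DecidableEq (IsFreeGroup.Generators ↥D) := Classical.decEq _
  have hg1' : (⟨g, hgD⟩ : D) ≠ 1 := by
    intro h
    exact hg1 (congrArg Subtype.val h)
  have hz1 : e ⟨g, hgD⟩ ≠ 1 := fun h => hg1' (by
    have := congrArg e.symm h
    rwa [MulEquiv.symm_apply_apply, map_one] at this)
  have hcen' : ∀ x : FreeGroup (IsFreeGroup.Generators ↥D),
      x * e ⟨g, hgD⟩ = e ⟨g, hgD⟩ * x := by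
    intro x
    obtain ⟨y, rfl⟩ := e.surjective x
    rw [← map_mul, ← map_mul]
    congr 1
    apply Subtype.ext
    show (y : FreeGroup S) * g = g * (y : FreeGroup S)
    exact hcen y y.2
  haveI hsub : Subsingleton (IsFreeGroup.Generators ↥D) :=
    ⟨gen_eq_of_center _ hz1 hcen'⟩
  have hne : Nonempty (IsFreeGroup.Generators ↥D) := by
    by_contra hh
    exact hz1 (freegroup_empty (not_nonempty_iff.mp hh) _)
  obtain ⟨a⟩ := hne
  refine ⟨e.symm (FreeGroup.of a), ?_, ?_⟩
  · intro x
    obtain ⟨s, hs⟩ := freegroup_subsingleton_gen a (e x)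
    exact ⟨s, by rw [← map_zpow, hs, MulEquiv.symm_apply_apply]⟩
  · intro s t hst
    apply freegroup_gen_pow_inj a
    have h2 := congrArg e hst
    rwa [map_zpow, map_zpow, MulEquiv.apply_symm_apply] at h2

end Aux
theorem statement_12 (G H : Graph') [Finite G.V] [Finite H.V]
    (hGconn : Graph'.Connected G) (hHconn : Graph'.Connected H)
    (hGe : ∃ x y : G.V, G.E x y) (hHe : ∃ x y : H.V, H.E x y)
    (hHsf : SquareFree H)
    (f : G.V → H.V) (hf : IsGraphHom G H f)
    (v : G.V) (hv : ∃ v' : G.V, G.E v v')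
    (hK : ∃ γ₀ : Walk G v v,
      (∀ γ : Walk G v v, ∃ k : ℤ,
        Eqv2 (Walk.map f hf γ) (Walk.zpow (Walk.map f hf γ₀) k)) ∧
      (∀ k : ℤ, k ≠ 0 →
        ¬ Eqv2 (Walk.zpow (Walk.map f hf γ₀) k) (constWalk (f v)))) :
    (∀ ω : Walk H (f v) (f v), Realizable f v ω → Eqv2 ω (constWalk (f v))) ∨
    (∃ ω₀ : Walk H (f v) (f v), Realizable f v ω₀ ∧
      (∀ ω : Walk H (f v) (f v), Realizable f v ω →
        ∃ k : ℤ, Eqv2 ω (Walk.zpow ω₀ k)) ∧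
      (∀ k : ℤ, k ≠ 0 → ¬ Eqv2 (Walk.zpow ω₀ k) (constWalk (f v)))) := by
  classical
  obtain ⟨v', hvv'0⟩ := hv
  obtain ⟨γ₀, hK1, hK2⟩ := hK
  obtain ⟨emb, hemb⟩ := Countable.exists_injective_nat H.V
  have hirr := hHsf.1
  have hsq := hHsf.2
  set g : FreeGroup (H.V × H.V) := Aux.wordOf emb (Walk.map f hf γ₀) with hg
  -- every realizable word commutes with g
  have hcommω : ∀ (ω : Walk H (f v) (f v)), Realizable f v ω →
      Aux.wordOf emb ω * g = g * Aux.wordOf emb ω := by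
    intro ω hω
    obtain ⟨n, h, hh, hs, he, v'', hvv'', heqv⟩ := hω
    have h1 : Aux.wordOf emb ω = Aux.wordOf emb ((Aux.uhOf h hh).rwalk hvv'' n) := by
      rw [Aux.wordOf_sound hemb hirr hsq heqv, Aux.wordOf_realizedWalk]
    have h2 := Aux.commAll hemb hirr hsq (Aux.uhOf h hh) hvv'' γ₀ n
    rw [Aux.wordOf_slice_eq_map h hh f hf γ₀ 0 hs,
      Aux.wordOf_slice_eq_map h hh f hf γ₀ n he, ← hg] at h2
    rw [h1]
    exact h2.symm
  set R : Set (FreeGroup (H.V × H.V)) :=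
    {x | ∃ ω : Walk H (f v) (f v), Realizable f v ω ∧ Aux.wordOf emb ω = x} with hR
  have hRg : ∀ x ∈ R, x * g = g * x := by
    rintro x ⟨ω, hω, rfl⟩
    exact hcommω ω hω
  -- the constant walk is realizable
  have hconst : Realizable f v (constWalk (f v)) := by
    refine ⟨0, fun p => f p.1, ?_, fun x => rfl, fun x => rfl, v', hvv'0, ?_⟩
    · rintro ⟨x, i⟩ ⟨y, j⟩ ⟨hxy, _, _⟩
      exact hf hxy
    · refine Aux.eqv2_of_agree ?_ ?_
      · show (0 : ℕ) = 2 * 0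
        omega
      intro i hi
      have h0 : i = 0 := by
        have : i ≤ 0 := hi
        omega
      subst h0
      rfl
  have hR1 : (1 : FreeGroup (H.V × H.V)) ∈ R :=
    ⟨constWalk (f v), hconst, Aux.wordOf_const _⟩
  -- R is closed under multiplication
  have hRmul : ∀ x ∈ R, ∀ y ∈ R, x * y ∈ R := by
    rintro x ⟨ω1, hω1, rfl⟩ y ⟨ω2, hω2, rfl⟩
    obtain ⟨n1, h1, hh1, hs1, he1, v1', hv1', heq1⟩ := hω1
    obtain ⟨n2, h2, hh2, hs2, he2, v2', hv2', heq2⟩ := hω2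
    have hstack : IsGraphHom (prodI G (n1 + n2)) H (Aux.stackH h1 h2) :=
      Aux.stackH_isHom h1 h2 f hh1 hh2 he1 hs2
    have hsS : ∀ x, Aux.stackH h1 h2 (x, finClip (n1+n2) 0) = f x := by
      intro x
      rw [Aux.stackH_val h1 h2 f he1 hs2 x 0 (by omega), if_pos (by omega)]
      exact hs1 x
    have heS : ∀ x, Aux.stackH h1 h2 (x, finClip (n1+n2) (n1+n2)) = f x := by
      intro x
      rw [Aux.stackH_val h1 h2 f he1 hs2 x (n1+n2) (by omega)]
      by_cases hc : n1 + n2 ≤ n1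
      · rw [if_pos hc, show finClip n1 (n1+n2) = finClip n1 n1 from
          Fin.ext (by show min (n1+n2) n1 = min n1 n1; omega)]
        exact he1 x
      · rw [if_neg hc, show n1 + n2 - n1 = n2 by omega]
        exact he2 x
    refine ⟨realizedWalk (Aux.stackH h1 h2) hstack hv1' (hsS v) (heS v),
      ⟨n1 + n2, _, hstack, hsS, heS, v1', hv1', Aux.eqv2_refl _⟩, ?_⟩
    rw [Aux.wordOf_realizedWalk, Aux.stackH_word h1 h2 f hh1 hh2 he1 hs2 hstack hv1']
    congr 1
    · exact ((Aux.wordOf_sound hemb hirr hsq heq1).trans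
        (Aux.wordOf_realizedWalk h1 hh1 hv1' (hs1 v) (he1 v))).symm
    · rw [Aux.rwalk_nbr hemb hirr hsq (Aux.uhOf h2 hh2) hv1' hv2' n2]
      exact ((Aux.wordOf_sound hemb hirr hsq heq2).trans
        (Aux.wordOf_realizedWalk h2 hh2 hv2' (hs2 v) (he2 v))).symm
  -- R is closed under inverse
  have hRinv : ∀ x ∈ R, x⁻¹ ∈ R := by
    rintro x ⟨ω, hω, rfl⟩
    obtain ⟨n, h, hh, hs, he, v'', hv'', heq⟩ := hω
    have hrev : IsGraphHom (prodI G n) H (Aux.revH h) := Aux.revH_isHom h hh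
    have hsR : ∀ x, Aux.revH h (x, finClip n 0) = f x := by
      intro x
      show h (x, finClip n (n - min 0 n)) = f x
      rw [show n - min 0 n = n by omega]
      exact he x
    have heR : ∀ x, Aux.revH h (x, finClip n n) = f x := by
      intro x
      show h (x, finClip n (n - min n n)) = f x
      rw [show n - min n n = 0 by omega]
      exact hs x
    refine ⟨realizedWalk (Aux.revH h) hrev hv'' (hsR v) (heR v),
      ⟨n, _, hrev, hsR, heR, v'', hv'', Aux.eqv2_refl _⟩, ?_⟩
    rw [Aux.wordOf_realizedWalk, Aux.revH_word h hh hemb hirr hsq hrev hv'']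
    congr 1
    exact ((Aux.wordOf_sound hemb hirr hsq heq).trans
      (Aux.wordOf_realizedWalk h hh hv'' (hs v) (he v))).symm
  -- g is nontrivial
  have hg1 : g ≠ 1 := by
    intro hgone
    apply hK2 1 one_ne_zero
    apply Aux.wordOf_complete hemb hirr
    rw [Aux.wordOf_zpow hemb hirr, Aux.wordOf_const, ← hg, hgone, one_zpow]
  -- the subgroup D
  set D : Subgroup (FreeGroup (H.V × H.V)) := Subgroup.closure (R ∪ {g}) with hD
  have hgD : g ∈ D := Subgroup.subset_closure (Or.inr rfl)
  have hcenD : ∀ x ∈ D, x * g = g * x := by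
    intro x hx
    have hcomm : Commute x g := by
      refine Subgroup.closure_induction ?_ ?_ ?_ ?_ hx
      · rintro y (hy | hy)
        · exact hRg y hy
        · rw [Set.mem_singleton_iff] at hy
          subst hy
          exact Commute.refl g
      · exact Commute.one_left g
      · intro a b _ _ ha hb
        exact Commute.mul_left ha hb
      · intro a _ ha
        exact Commute.inv_left ha
    exact hcomm
  obtain ⟨z₁, hzall, hzinj⟩ := Aux.cyclic_of_center D g hgD hg1 hcenD
  set A : AddSubgroup ℤ :=
    { carrier := {t : ℤ | ((z₁ ^ t : D) : FreeGroup (H.V × H.V)) ∈ R}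
      zero_mem' := by
        show ((z₁ ^ (0 : ℤ) : D) : FreeGroup (H.V × H.V)) ∈ R
        rw [zpow_zero, OneMemClass.coe_one]
        exact hR1
      add_mem' := by
        intro s t hs2 ht2
        show ((z₁ ^ (s + t) : D) : FreeGroup (H.V × H.V)) ∈ R
        rw [zpow_add, MulMemClass.coe_mul]
        exact hRmul _ hs2 _ ht2
      neg_mem' := by
        intro s hs2
        show ((z₁ ^ (-s) : D) : FreeGroup (H.V × H.V)) ∈ R
        rw [zpow_neg, InvMemClass.coe_inv]
        exact hRinv _ hs2 } with hA
  obtain ⟨d, hdA⟩ := Int.subgroup_cyclic A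
  have hform : ∀ (ω : Walk H (f v) (f v)), Realizable f v ω →
      ∃ t : ℤ, Aux.wordOf emb ω = ((z₁ ^ t : D) : FreeGroup (H.V × H.V)) ∧ t ∈ A := by
    intro ω hω
    have hmem : Aux.wordOf emb ω ∈ D :=
      Subgroup.subset_closure (Or.inl ⟨ω, hω, rfl⟩)
    obtain ⟨t, ht⟩ := hzall ⟨_, hmem⟩
    have hcoe : ((z₁ ^ t : D) : FreeGroup (H.V × H.V)) = Aux.wordOf emb ω :=
      congrArg Subtype.val ht
    refine ⟨t, hcoe.symm, ?_⟩
    show ((z₁ ^ t : D) : FreeGroup (H.V × H.V)) ∈ R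
    rw [hcoe]
    exact ⟨ω, hω, rfl⟩
  have hdmem : d ∈ A := by
    rw [hdA]
    exact AddSubgroup.subset_closure rfl
  obtain ⟨ω₀, hω₀real, hω₀w⟩ : ∃ ω₀ : Walk H (f v) (f v), Realizable f v ω₀ ∧
      Aux.wordOf emb ω₀ = ((z₁ ^ d : D) : FreeGroup (H.V × H.V)) := hdmem
  by_cases hd0 : d = 0
  · left
    intro ω hω
    obtain ⟨t, htw, htA⟩ := hform ω hω
    have ht0 : t = 0 := by
      rw [hdA] at htA
      obtain ⟨k, hk⟩ := AddSubgroup.mem_closure_singleton.mp htA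
      rw [hd0] at hk
      simpa using hk.symm
    apply Aux.wordOf_complete hemb hirr
    rw [htw, ht0, Aux.wordOf_const, zpow_zero, OneMemClass.coe_one]
  · right
    refine ⟨ω₀, hω₀real, ?_, ?_⟩
    · intro ω hω
      obtain ⟨t, htw, htA⟩ := hform ω hω
      rw [hdA] at htA
      obtain ⟨k, hk⟩ := AddSubgroup.mem_closure_singleton.mp htA
      refine ⟨k, ?_⟩
      apply Aux.wordOf_complete hemb hirr
      rw [htw, Aux.wordOf_zpow hemb hirr, hω₀w, ← SubgroupClass.coe_zpow, ← zpow_mul]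
      have ht : t = d * k := by
        rw [← hk]
        simp [mul_comm]
      rw [ht]
    · intro k hk0 hEq
      have h1 := Aux.wordOf_sound hemb hirr hsq hEq
      rw [Aux.wordOf_zpow hemb hirr, Aux.wordOf_const, hω₀w, ← SubgroupClass.coe_zpow,
        ← zpow_mul] at h1
      have h3 : z₁ ^ (d * k) = z₁ ^ (0 : ℤ) := by
        apply Subtype.coe_injective
        show ((z₁ ^ (d * k) : D) : FreeGroup (H.V × H.V)) =
          ((z₁ ^ (0 : ℤ) : D) : FreeGroup (H.V × H.V))
        rw [h1, zpow_zero, OneMemClass.coe_one]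
      have h4 := hzinj _ _ h3
      exact (mul_ne_zero hd0 hk0) h4
end
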